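/- arXiv:1909.12051 — 10 statements merged into one kernel-verified Lean document; each statement's English description precedes it below -/
import Mathlib

section
/- Let σᵢ* = r·σⱼ* with r > 1, σⱼ* > 0, and let σᵢ, σⱼ both solve σ' = σ(σ* - σ) with respective targets σᵢ*, σⱼ* and common initialization σ₀. For s ∈ (0, 1/4), f ∈ (3/4, 1), if σ₀ ≤ s·σⱼ*·(s/(rf))^{1/((1-f)(r-1))}, then there exists a time t with σⱼ(t) ≤ s·σⱼ* and σᵢ(t) ≥ f·σᵢ*. -/
open Real

lemma const_of_deriv_zero (g : ℝ → ℝ) (h : ∀ t, HasDerivAt g 0 t) (t : ℝ) : g t = g 0 :=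
  is_const_of_deriv_eq_zero (fun u => (h u).differentiableAt) (fun u => (h u).deriv) t 0

lemma logistic_formula (σs σ0 : ℝ) (hσs : 0 < σs) (hσ0 : 0 < σ0)
    (σ : ℝ → ℝ) (hode : ∀ t, HasDerivAt σ (σ t * (σs - σ t)) t) (hinit : σ 0 = σ0) :
    ∀ t, 0 < σ t ∧ (σ t)⁻¹ = Real.exp (-(σs * t)) * (1/σ0 - 1/σs) + 1/σs := by
  have hcont : Continuous σ := by
    have : Differentiable ℝ σ := fun t => (hode t).differentiableAt
    exact this.continuous
  set A : ℝ → ℝ := fun t => ∫ u in (0:ℝ)..t, (σs - σ u) with hAdef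
  have hA : ∀ t, HasDerivAt A (σs - σ t) t := fun t =>
    ((Continuous.sub continuous_const hcont).integral_hasStrictDerivAt 0 t).hasDerivAt
  have hpos : ∀ t, 0 < σ t := by
    have hF : ∀ t, HasDerivAt (fun t => σ t * Real.exp (-(A t))) 0 t := by
      intro t
      have := (hode t).mul (((hA t).neg).exp)
      refine this.congr_deriv ?_
      ring
    intro t
    have hc := const_of_deriv_zero _ hF t
    have hA0 : A 0 = 0 := by simp [hAdef]
    rw [hA0, hinit] at hc
    simp only [neg_zero, Real.exp_zero, mul_one] at hc
    have hE := Real.exp_pos (-(A t))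
    nlinarith [hc, hE, hσ0]
  intro t
  refine ⟨hpos t, ?_⟩
  have hw : ∀ u, HasDerivAt (fun u => (σ u)⁻¹) (1 - σs * (σ u)⁻¹) u := by
    intro u
    have := (hode u).inv (ne_of_gt (hpos u))
    refine this.congr_deriv ?_
    field_simp [(hpos u).ne']
    ring
  have hG : ∀ u, HasDerivAt (fun u => (σ u)⁻¹ * Real.exp (σs * u) - Real.exp (σs * u) / σs) 0 u := by
    intro u
    have h1 : HasDerivAt (fun u : ℝ => Real.exp (σs * u)) (σs * Real.exp (σs * u)) u := by
      have := ((hasDerivAt_id u).const_mul σs).exp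
      simp only [id_eq, mul_one] at this
      convert this using 1
      ring
    have := ((hw u).mul h1).sub (h1.div_const σs)
    refine this.congr_deriv ?_
    field_simp [hσs.ne']
    ring
  have hc := const_of_deriv_zero _ hG t
  simp only [mul_zero, Real.exp_zero, mul_one] at hc
  rw [hinit] at hc
  set E := Real.exp (σs * t) with hEdef
  have hE : 0 < E := Real.exp_pos _
  have key : (σ t)⁻¹ * E = 1/σ0 - 1/σs + E/σs := by
    simp only [one_div] at hc ⊢
    linarith [hc]
  rw [show -(σs * t) = -(σs * t) from rfl, Real.exp_neg, ← hEdef]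
  have h2 : E * ((σ t)⁻¹) = E * (E⁻¹ * (1/σ0 - 1/σs) + 1/σs) := by
    rw [mul_add, ← mul_assoc, mul_inv_cancel₀ hE.ne', one_mul]
    rw [mul_comm E ((σ t)⁻¹)]
    rw [key]
    field_simp
  exact mul_left_cancel₀ hE.ne' h2

set_option maxHeartbeats 1000000 in
theorem stmt_5 (r σjs σis σ0 s f : ℝ)
    (hr : 1 < r) (hσjs : 0 < σjs) (his : σis = r * σjs)
    (hσ0 : 0 < σ0) (hσ0j : σ0 < σjs)
    (hs : s ∈ Set.Ioo (0 : ℝ) (1/4)) (hf : f ∈ Set.Ioo (3/4 : ℝ) 1)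
    (σi σj : ℝ → ℝ)
    (hodei : ∀ t : ℝ, HasDerivAt σi (σi t * (σis - σi t)) t)
    (hodej : ∀ t : ℝ, HasDerivAt σj (σj t * (σjs - σj t)) t)
    (hiniti : σi 0 = σ0) (hinitj : σj 0 = σ0)
    (hcond : σ0 ≤ s * σjs * (s / (r * f)) ^ (1 / ((1 - f) * (r - 1)))) :
    ∃ t : ℝ, 0 ≤ t ∧ σj t ≤ s * σjs ∧ f * σis ≤ σi t := by
  obtain ⟨hs1, hs2⟩ := hs
  obtain ⟨hf1, hf2⟩ := hf
  have hr0 : (0:ℝ) < r := by linarith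
  have hr1 : (0:ℝ) < r - 1 := by linarith
  have hf0 : (0:ℝ) < f := by linarith
  have h1f : (0:ℝ) < 1 - f := by linarith
  have h1s : (0:ℝ) < 1 - s := by linarith
  have hσis : 0 < σis := by rw [his]; positivity
  have hσ0i : σ0 < σis := by rw [his]; nlinarith
  set x : ℝ := s / (r * f) with hxdef
  have hx0 : 0 < x := by positivity
  have hx13 : x < 1/3 := by
    rw [hxdef, div_lt_iff₀ (by positivity)]
    nlinarith
  have hK1 : (s / (r * f)) ^ (1 / ((1 - f) * (r - 1))) ≤ 1 :=
    Real.rpow_le_one hx0.le (by linarith) (le_of_lt (by apply div_pos one_pos; nlinarith))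
  have hσ0s : σ0 ≤ s * σjs := by
    calc σ0 ≤ s * σjs * (s / (r * f)) ^ (1 / ((1 - f) * (r - 1))) := hcond
    _ ≤ s * σjs * 1 := mul_le_mul_of_nonneg_left hK1 (by positivity)
    _ = s * σjs := mul_one _
  set a : ℝ := f * (σis - σ0) / ((1 - f) * σ0) with hadef
  have hσ0fi : σ0 < f * σis := by rw [his]; nlinarith
  have ha1 : 1 ≤ a := by
    rw [hadef, le_div_iff₀ (by positivity)]
    nlinarith
  have ha0 : 0 < a := by linarith
  set t : ℝ := Real.log a / σis with htdef
  have ht0 : 0 ≤ t := div_nonneg (Real.log_nonneg ha1) hσis.le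
  refine ⟨t, ht0, ?_, ?_⟩
  case refine_2 =>
    -- f * σis ≤ σi t
    obtain ⟨hipos, hieq⟩ := logistic_formula σis σ0 hσis hσ0 σi hodei hiniti t
    have hexpi : Real.exp (-(σis * t)) = (1 - f) * σ0 / (f * (σis - σ0)) := by
      rw [htdef, mul_div_cancel₀ _ hσis.ne', Real.exp_neg, Real.exp_log ha0, hadef]
      field_simp
    rw [hexpi] at hieq
    have hieq2 : (σi t)⁻¹ = (f * σis)⁻¹ := by
      rw [hieq]
      have h1 : σis - σ0 ≠ 0 := by linarith
      field_simp
      ring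
    have := inv_injective hieq2
    linarith [this]
  case refine_1 =>
    -- σj t ≤ s * σjs
    obtain ⟨hjpos, hjeq⟩ := logistic_formula σjs σ0 hσjs hσ0 σj hodej hinitj t
    set Ei : ℝ := (1 - f) * σ0 / (f * (σis - σ0)) with hEidef
    have hEi0 : 0 < Ei := by
      rw [hEidef]; apply div_pos (by positivity) (by nlinarith)
    have hexpi : Real.exp (-(σis * t)) = Ei := by
      rw [htdef, mul_div_cancel₀ _ hσis.ne', Real.exp_neg, Real.exp_log ha0, hadef, hEidef]
      field_simp
    have hexpj : Real.exp (-(σjs * t)) = Ei ^ (1/r : ℝ) := by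
      have h1 : σjs * t = σis * t * (1/r) := by
        rw [his]; field_simp
      rw [h1, Real.rpow_def_of_pos hEi0, ← hexpi, Real.log_exp]
      ring_nf
    rw [hexpj] at hjeq
    set B : ℝ := (1 - s) * σ0 / (s * (σjs - σ0)) with hBdef
    have hjs0 : 0 < σjs - σ0 := by linarith
    have hB0 : 0 < B := by positivity
    -- the key power inequality x^(f/(1-f)) ≤ 1 - f
    set X : ℝ := x ^ (f/(1-f) : ℝ) with hXdef
    have hX0 : 0 < X := Real.rpow_pos_of_pos hx0 _
    have hxf : X ≤ 1 - f := by
      have hy0 : (0:ℝ) ≤ f/(1-f) := div_nonneg hf0.le h1f.le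
      have hxe : x ≤ Real.exp (-1) := by
        have h3 : Real.exp 1 < 3 := by
          have := Real.exp_one_lt_d9; linarith
        have h4 : (1:ℝ)/3 < Real.exp (-1) := by
          rw [Real.exp_neg]
          nlinarith [mul_inv_cancel₀ (ne_of_gt (Real.exp_pos 1)), Real.exp_pos 1,
            inv_pos.mpr (Real.exp_pos 1)]
        linarith
      have step1 : X ≤ (Real.exp (-1)) ^ (f/(1-f) : ℝ) :=
        Real.rpow_le_rpow hx0.le hxe hy0
      have step2 : (Real.exp (-1)) ^ (f/(1-f) : ℝ) = Real.exp (-(f/(1-f))) := by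
        rw [Real.rpow_def_of_pos (Real.exp_pos _), Real.log_exp]
        ring_nf
      have step3 : Real.exp (-(f/(1-f))) ≤ 1 - f := by
        have hu : (0:ℝ) < 1/(1-f) := by positivity
        have hlog : Real.log (1/(1-f)) ≤ 1/(1-f) - 1 := Real.log_le_sub_one_of_pos hu
        have h5 : 1/(1-f) ≤ Real.exp (1/(1-f) - 1) := by
          calc 1/(1-f) = Real.exp (Real.log (1/(1-f))) := (Real.exp_log hu).symm
          _ ≤ Real.exp (1/(1-f) - 1) := Real.exp_le_exp.mpr hlog
        have heq : f/(1-f) = 1/(1-f) - 1 := by field_simp; ring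
        rw [Real.exp_neg, heq]
        have h6 := inv_anti₀ hu h5
        simpa using h6
      calc X ≤ (Real.exp (-1)) ^ (f/(1-f) : ℝ) := step1
      _ = Real.exp (-(f/(1-f))) := step2
      _ ≤ 1 - f := step3
    -- σ0^(r-1) bound
    set p : ℝ := r - 1 with hpdef
    have hp0 : (0:ℝ) ≤ p := by linarith
    have hKp : ((s / (r * f)) ^ (1 / ((1 - f) * (r - 1)))) ^ (p:ℝ) = X * x := by
      rw [← Real.rpow_mul hx0.le]
      have he : 1 / ((1 - f) * (r - 1)) * p = 1/(1-f) := by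
        rw [hpdef]; field_simp [show r - 1 ≠ 0 by linarith]
      rw [he, hXdef]
      have : (1:ℝ)/(1-f) = f/(1-f) + 1 := by field_simp; ring
      rw [this, Real.rpow_add hx0, Real.rpow_one]
    have hσ0p : σ0 ^ (p:ℝ) ≤ s ^ (p:ℝ) * σjs ^ (p:ℝ) * (X * x) := by
      have h1 := Real.rpow_le_rpow hσ0.le hcond hp0
      rwa [Real.mul_rpow (by positivity) (by positivity),
        Real.mul_rpow hs1.le hσjs.le, hKp] at h1
    -- powers split
    have hσ0r : σ0 ^ (r:ℝ) = σ0 ^ (p:ℝ) * σ0 := by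
      have : (r:ℝ) = p + 1 := by rw [hpdef]; ring
      rw [this, Real.rpow_add hσ0, Real.rpow_one]
    have hsr : s ^ (r:ℝ) = s ^ (p:ℝ) * s := by
      have : (r:ℝ) = p + 1 := by rw [hpdef]; ring
      rw [this, Real.rpow_add hs1, Real.rpow_one]
    have hjsr : σjs ^ (r:ℝ) = σjs ^ (p:ℝ) * σjs := by
      have : (r:ℝ) = p + 1 := by rw [hpdef]; ring
      rw [this, Real.rpow_add hσjs, Real.rpow_one]
    have hF5 : (1-s) ^ (r:ℝ) * σjs ^ (r:ℝ) ≤ (σjs - σ0) ^ (r:ℝ) := by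
      rw [← Real.mul_rpow h1s.le hσjs.le]
      exact Real.rpow_le_rpow (by positivity) (by nlinarith) hr0.le
    have hF7 : x * (f * r) = s := by
      rw [hxdef]; field_simp
    -- the central cross inequality
    have hcross : (1-s) ^ (r:ℝ) * σ0 ^ (r:ℝ) * (f * (σis - σ0)) ≤
        (1-f) * σ0 * (s ^ (r:ℝ) * (σjs - σ0) ^ (r:ℝ)) := by
      calc (1-s) ^ (r:ℝ) * σ0 ^ (r:ℝ) * (f * (σis - σ0))
          = (1-s) ^ (r:ℝ) * (σ0 ^ (p:ℝ) * σ0) * (f * (σis - σ0)) := by rw [hσ0r]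
        _ ≤ (1-s) ^ (r:ℝ) * (σ0 ^ (p:ℝ) * σ0) * (f * (r * σjs)) := by
            gcongr
            rw [his]; linarith
        _ ≤ (1-s) ^ (r:ℝ) * ((s ^ (p:ℝ) * σjs ^ (p:ℝ) * (X * x)) * σ0) * (f * (r * σjs)) := by
            gcongr
        _ = (1-s) ^ (r:ℝ) * s ^ (p:ℝ) * σjs ^ (p:ℝ) * σjs * σ0 * (X * (x * (f * r))) := by
            ring
        _ = (1-s) ^ (r:ℝ) * s ^ (p:ℝ) * σjs ^ (p:ℝ) * σjs * σ0 * (X * s) := by rw [hF7]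
        _ ≤ (1-s) ^ (r:ℝ) * s ^ (p:ℝ) * σjs ^ (p:ℝ) * σjs * σ0 * ((1-f) * s) := by
            gcongr
        _ = (1-f) * σ0 * ((s ^ (p:ℝ) * s) * ((1-s) ^ (r:ℝ) * (σjs ^ (p:ℝ) * σjs))) := by ring
        _ = (1-f) * σ0 * (s ^ (r:ℝ) * ((1-s) ^ (r:ℝ) * σjs ^ (r:ℝ))) := by rw [hsr, hjsr]
        _ ≤ (1-f) * σ0 * (s ^ (r:ℝ) * (σjs - σ0) ^ (r:ℝ)) := by
            gcongr
    have hBr : B ^ (r:ℝ) ≤ Ei := by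
      rw [hBdef, hEidef, Real.div_rpow (by positivity) (by positivity),
        Real.mul_rpow h1s.le hσ0.le, Real.mul_rpow hs1.le hjs0.le]
      have hd1 : 0 < s ^ (r:ℝ) * (σjs - σ0) ^ (r:ℝ) :=
        mul_pos (Real.rpow_pos_of_pos hs1 _) (Real.rpow_pos_of_pos hjs0 _)
      have hd2 : 0 < f * (σis - σ0) := mul_pos hf0 (by linarith)
      rw [div_le_div_iff₀ hd1 hd2]
      linarith [hcross]
    have hB : B ≤ Ei ^ ((1:ℝ)/r) := by
      have h := Real.rpow_le_rpow (by positivity) hBr (by positivity : (0:ℝ) ≤ 1/r)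
      rwa [← Real.rpow_mul hB0.le, mul_one_div_cancel hr0.ne', Real.rpow_one] at h
    have hBeq : B * (1/σ0 - 1/σjs) + 1/σjs = (s * σjs)⁻¹ := by
      rw [hBdef]
      field_simp
      ring
    have hd : (0:ℝ) ≤ 1/σ0 - 1/σjs := by
      rw [sub_nonneg]
      apply div_le_div_of_nonneg_left one_pos.le hσ0 hσ0j.le
      -- fallback
    have hinv : (s * σjs)⁻¹ ≤ (σj t)⁻¹ := by
      rw [hjeq, ← hBeq]
      have := mul_le_mul_of_nonneg_right hB hd
      linarith
    have h2 := inv_anti₀ (by positivity : (0:ℝ) < (s*σjs)⁻¹) hinv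
    rwa [inv_inv, inv_inv] at h2
end

section
/- Let σᵢ* = r·σⱼ* with r > 1, σⱼ* > 0, N ≥ 3, and let σᵢ, σⱼ both solve σ' = σ^{2-2/N}(σ* - σ) with respective targets σᵢ*, σⱼ* and common initialization σ₀ ∈ (0, σⱼ*). For s ∈ (0,1/4), f ∈ (3/4,1), if σ₀ ≤ s·σⱼ*·((1-f)(r-1)/(1+(1-f)(r-1)))^{N/(N-2)}, then there exists t with σⱼ(t) ≤ s·σⱼ* and σᵢ(t) ≥ f·σᵢ*. -/
open Set Filter Topology

section helpers

variable {α σs σ0 : ℝ} {σ : ℝ → ℝ}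

private lemma sigma_cont (hode : ∀ t, HasDerivAt σ (σ t ^ α * (σs - σ t)) t) :
    Continuous σ :=
  continuous_iff_continuousAt.2 fun t => (hode t).continuousAt

/-- If σ stays below σs on [0,T], it stays positive there. -/
private lemma stepA (h0 : 0 < σ0)
    (hode : ∀ t, HasDerivAt σ (σ t ^ α * (σs - σ t)) t) (hinit : σ 0 = σ0)
    (T : ℝ) (hlt : ∀ t ∈ Icc (0:ℝ) T, σ t < σs) :
    ∀ t ∈ Icc (0:ℝ) T, 0 < σ t := by
  by_contra hcon
  push_neg at hcon
  obtain ⟨t', ht', hσt'⟩ := hcon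
  set S : Set ℝ := Icc 0 T ∩ σ ⁻¹' (Iic 0) with hSdef
  have hSne : S.Nonempty := ⟨t', ht', hσt'⟩
  have hScl : IsClosed S := isClosed_Icc.inter (isClosed_Iic.preimage (sigma_cont hode))
  have hSbd : BddBelow S := ⟨0, fun x hx => hx.1.1⟩
  set t0 := sInf S with ht0def
  have ht0S : t0 ∈ S := hScl.csInf_mem hSne hSbd
  have ht0pos : 0 < t0 := by
    rcases lt_or_eq_of_le ht0S.1.1 with h | h
    · exact h
    · exfalso
      have h2 : σ t0 ≤ 0 := ht0S.2
      rw [← h, hinit] at h2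
      linarith
  have hpos : ∀ t ∈ Ico (0:ℝ) t0, 0 < σ t := by
    intro t ht
    by_contra h
    push_neg at h
    have htS : t ∈ S := ⟨⟨ht.1, le_trans ht.2.le ht0S.1.2⟩, h⟩
    have := csInf_le hSbd htS
    rw [← ht0def] at this
    linarith [ht.2]
  have hmono : StrictMonoOn σ (Icc 0 t0) := by
    apply strictMonoOn_of_deriv_pos (convex_Icc 0 t0) (sigma_cont hode).continuousOn
    intro t ht
    rw [interior_Icc] at ht
    rw [(hode t).deriv]
    have h1 : 0 < σ t := hpos t ⟨ht.1.le, ht.2⟩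
    have h2 : σ t < σs := hlt t ⟨ht.1.le, le_trans ht.2.le ht0S.1.2⟩
    exact mul_pos (Real.rpow_pos_of_pos h1 α) (sub_pos.2 h2)
  have h3 : σ 0 < σ t0 :=
    hmono ⟨le_refl 0, ht0pos.le⟩ ⟨ht0pos.le, le_refl t0⟩ ht0pos
  rw [hinit] at h3
  have h4 : σ t0 ≤ 0 := ht0S.2
  linarith

/-- Invariance: the solution stays in (0, σs) for t ≥ 0. -/
private lemma inv_lemma (hα0 : 0 ≤ α) (h0 : 0 < σ0) (h0s : σ0 < σs)
    (hode : ∀ t, HasDerivAt σ (σ t ^ α * (σs - σ t)) t) (hinit : σ 0 = σ0) :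
    ∀ t, 0 ≤ t → 0 < σ t ∧ σ t < σs := by
  have hcont := sigma_cont hode
  have hupper : ∀ t, 0 ≤ t → σ t < σs := by
    by_contra hcon
    push_neg at hcon
    obtain ⟨t', ht', hσt'⟩ := hcon
    set S : Set ℝ := Ici 0 ∩ σ ⁻¹' (Ici σs) with hSdef
    have hSne : S.Nonempty := ⟨t', ht', hσt'⟩
    have hScl : IsClosed S := isClosed_Ici.inter (isClosed_Ici.preimage hcont)
    have hSbd : BddBelow S := ⟨0, fun x hx => hx.1⟩
    set th := sInf S with hthdef
    have hthS : th ∈ S := hScl.csInf_mem hSne hSbd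
    have hthpos : 0 < th := by
      rcases lt_or_eq_of_le (Set.mem_Ici.1 hthS.1) with h | h
      · exact h
      · exfalso
        have h2 : σs ≤ σ th := hthS.2
        rw [← h, hinit] at h2
        linarith
    have hlt : ∀ t ∈ Ico (0:ℝ) th, σ t < σs := by
      intro t ht
      by_contra h
      push_neg at h
      have htS : t ∈ S := ⟨ht.1, h⟩
      have := csInf_le hSbd htS
      rw [← hthdef] at this
      linarith [ht.2]
    have hth_eq : σ th = σs := by
      refine le_antisymm ?_ hthS.2
      have htd : Tendsto σ (𝓝[<] th) (𝓝 (σ th)) :=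
        (hcont.tendsto th).mono_left nhdsWithin_le_nhds
      refine le_of_tendsto htd ?_
      filter_upwards [Ioo_mem_nhdsLT_of_mem (show th ∈ Ioc (0:ℝ) th from ⟨hthpos, le_refl _⟩)]
        with x hx
      exact (hlt x ⟨hx.1.le, hx.2⟩).le
    have hin : ∀ t ∈ Icc (0:ℝ) th, 0 ≤ σ t ∧ σ t ≤ σs := by
      intro t ht
      rcases eq_or_lt_of_le ht.2 with h | h
      · rw [h, hth_eq]
        exact ⟨by linarith, le_refl _⟩
      · have h1 := stepA h0 hode hinit t
          (fun u hu => hlt u ⟨hu.1, lt_of_le_of_lt hu.2 h⟩) t ⟨ht.1, le_refl t⟩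
        exact ⟨h1.le, (hlt t ⟨ht.1, h⟩).le⟩
    set C := σs ^ α with hCdef
    set w : ℝ → ℝ := fun t => (σs - σ t) * Real.exp (C * t) with hwdef
    have hw : ∀ t, HasDerivAt w
        ((σs - σ t) * (C - σ t ^ α) * Real.exp (C * t)) t := by
      intro t
      have h1 : HasDerivAt (fun u => σs - σ u) (-(σ t ^ α * (σs - σ t))) t :=
        (hode t).const_sub σs
      have h2 : HasDerivAt (fun u : ℝ => Real.exp (C * u)) (Real.exp (C * t) * C) t := by
        have h3 : HasDerivAt (fun u : ℝ => C * u) C t := by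
          simpa using (hasDerivAt_id t).const_mul C
        exact (Real.hasDerivAt_exp (C * t)).comp t h3
      have := h1.mul h2
      refine this.congr_deriv ?_
      ring
    have hwmono : MonotoneOn w (Icc 0 th) := by
      apply monotoneOn_of_deriv_nonneg (convex_Icc _ _)
      · exact fun t _ => ((hw t).continuousAt).continuousWithinAt
      · intro t _
        exact (hw t).differentiableAt.differentiableWithinAt
      · intro t ht
        rw [interior_Icc] at ht
        rw [(hw t).deriv]
        obtain ⟨ha, hb⟩ := hin t ⟨ht.1.le, ht.2.le⟩
        have hC : σ t ^ α ≤ C := Real.rpow_le_rpow ha hb hα0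
        have he := Real.exp_pos (C * t)
        have : 0 ≤ (σs - σ t) * (C - σ t ^ α) :=
          mul_nonneg (by linarith) (by linarith)
        positivity
    have h1 := hwmono (left_mem_Icc.2 hthpos.le) (right_mem_Icc.2 hthpos.le) hthpos.le
    have hw0 : w 0 = σs - σ0 := by
      simp [hwdef, hinit]
    have hwth : w th = 0 := by
      simp [hwdef, hth_eq]
    rw [hw0, hwth] at h1
    linarith
  intro t ht
  refine ⟨?_, hupper t ht⟩
  exact stepA h0 hode hinit t (fun u hu => hupper u hu.1) t ⟨ht, le_refl t⟩

/-- Monotonicity on [0,∞). -/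
private lemma sigma_mono (hα0 : 0 ≤ α) (h0 : 0 < σ0) (h0s : σ0 < σs)
    (hode : ∀ t, HasDerivAt σ (σ t ^ α * (σs - σ t)) t) (hinit : σ 0 = σ0) :
    MonotoneOn σ (Ici 0) := by
  apply monotoneOn_of_deriv_nonneg (convex_Ici 0) (sigma_cont hode).continuousOn
    (fun t _ => (hode t).differentiableAt.differentiableWithinAt)
  intro t ht
  rw [interior_Ici] at ht
  rw [(hode t).deriv]
  obtain ⟨h1, h2⟩ := inv_lemma hα0 h0 h0s hode hinit t ht.le
  exact le_of_lt (mul_pos (Real.rpow_pos_of_pos h1 α) (sub_pos.2 h2))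

/-- Derivative of u = σ^(-β). -/
private lemma u_hasDeriv {β : ℝ} (hβ : β = α - 1)
    (hode : ∀ t, HasDerivAt σ (σ t ^ α * (σs - σ t)) t) {t : ℝ} (ht : 0 < σ t) :
    HasDerivAt (fun u => σ u ^ (-β)) (-(β * (σs - σ t))) t := by
  have h1 : HasDerivAt (fun x : ℝ => x ^ (-β)) (-β * σ t ^ (-β - 1)) (σ t) :=
    Real.hasDerivAt_rpow_const (Or.inl (ne_of_gt ht))
  have h2 := h1.comp t (hode t)
  have e : (-β - 1) + α = 0 := by rw [hβ]; ring
  have key : σ t ^ (-β - 1) * σ t ^ α = 1 := by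
    rw [← Real.rpow_add ht, e, Real.rpow_zero]
  refine h2.congr_deriv (Eq.symm ?_)
  calc -(β * (σs - σ t)) = -β * (σ t ^ (-β - 1) * σ t ^ α) * (σs - σ t) := by
        rw [key]; ring
    _ = -β * σ t ^ (-β - 1) * (σ t ^ α * (σs - σ t)) := by ring

/-- Decay upper bound: if σ ≤ c on [a,b] then u(b) ≤ u(a) - β(σs-c)(b-a). -/
private lemma decay_ub {β : ℝ} (hβ : β = α - 1) (hα1 : 1 ≤ α)
    (hode : ∀ t, HasDerivAt σ (σ t ^ α * (σs - σ t)) t) (a b c : ℝ) (hab : a ≤ b)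
    (hpos : ∀ t ∈ Icc a b, 0 < σ t) (hc : ∀ t ∈ Icc a b, σ t ≤ c) :
    σ b ^ (-β) ≤ σ a ^ (-β) - β * (σs - c) * (b - a) := by
  have hβ0 : 0 ≤ β := by rw [hβ]; linarith
  set φ : ℝ → ℝ := fun t => σ t ^ (-β) + β * (σs - c) * t with hφdef
  have hφd : ∀ t ∈ Icc a b, HasDerivAt φ (β * (σ t - c)) t := by
    intro t ht
    have := (u_hasDeriv hβ hode (hpos t ht)).add
      ((hasDerivAt_id t).const_mul (β * (σs - c)))
    refine this.congr_deriv ?_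
    ring
  have hanti : AntitoneOn φ (Icc a b) := by
    apply antitoneOn_of_deriv_nonpos (convex_Icc a b)
    · exact fun t ht => ((hφd t ht).continuousAt).continuousWithinAt
    · intro t ht
      rw [interior_Icc] at ht
      exact (hφd t (Ioo_subset_Icc_self ht)).differentiableAt.differentiableWithinAt
    · intro t ht
      rw [interior_Icc] at ht
      rw [(hφd t (Ioo_subset_Icc_self ht)).deriv]
      have := hc t (Ioo_subset_Icc_self ht)
      have : σ t - c ≤ 0 := by linarith
      exact mul_nonpos_of_nonneg_of_nonpos hβ0 this
  have h := hanti (left_mem_Icc.2 hab) (right_mem_Icc.2 hab) hab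
  simp only [hφdef] at h
  linarith

/-- Decay lower bound: u(b) ≥ u(a) - β σs (b-a). -/
private lemma decay_lb {β : ℝ} (hβ : β = α - 1) (hα1 : 1 ≤ α)
    (hode : ∀ t, HasDerivAt σ (σ t ^ α * (σs - σ t)) t) (a b : ℝ) (hab : a ≤ b)
    (hpos : ∀ t ∈ Icc a b, 0 < σ t) :
    σ a ^ (-β) - β * σs * (b - a) ≤ σ b ^ (-β) := by
  have hβ0 : 0 ≤ β := by rw [hβ]; linarith
  set φ : ℝ → ℝ := fun t => σ t ^ (-β) + β * σs * t with hφdef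
  have hφd : ∀ t ∈ Icc a b, HasDerivAt φ (β * σ t) t := by
    intro t ht
    have := (u_hasDeriv hβ hode (hpos t ht)).add
      ((hasDerivAt_id t).const_mul (β * σs))
    refine this.congr_deriv ?_
    ring
  have hmono : MonotoneOn φ (Icc a b) := by
    apply monotoneOn_of_deriv_nonneg (convex_Icc a b)
    · exact fun t ht => ((hφd t ht).continuousAt).continuousWithinAt
    · intro t ht
      rw [interior_Icc] at ht
      exact (hφd t (Ioo_subset_Icc_self ht)).differentiableAt.differentiableWithinAt
    · intro t ht
      rw [interior_Icc] at ht
      rw [(hφd t (Ioo_subset_Icc_self ht)).deriv]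
      exact mul_nonneg hβ0 (hpos t (Ioo_subset_Icc_self ht)).le
  have h := hmono (left_mem_Icc.2 hab) (right_mem_Icc.2 hab) hab
  simp only [hφdef] at h
  linarith

/-- Hitting time: the solution reaches level c exactly once from below. -/
private lemma hit {β : ℝ} (hβ : β = α - 1) (hα1 : 1 < α) (h0 : 0 < σ0) (h0s : σ0 < σs)
    (hode : ∀ t, HasDerivAt σ (σ t ^ α * (σs - σ t)) t) (hinit : σ 0 = σ0)
    (c : ℝ) (h0c : σ0 < c) (hcs : c < σs) :
    ∃ t, 0 < t ∧ σ t = c ∧ ∀ u ∈ Ico (0:ℝ) t, σ u < c := by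
  have hα0 : (0:ℝ) ≤ α := by linarith
  have hinv := inv_lemma hα0 h0 h0s hode hinit
  have hβpos : 0 < β := by rw [hβ]; linarith
  have hcont := sigma_cont hode
  have hne : ∃ t, 0 ≤ t ∧ c ≤ σ t := by
    by_contra hcon
    push_neg at hcon
    have hd : 0 < β * (σs - c) := mul_pos hβpos (by linarith)
    set T := (σ0 ^ (-β) + 1) / (β * (σs - c)) with hTdef
    have hX : 0 < σ0 ^ (-β) := Real.rpow_pos_of_pos h0 _
    have hT : 0 ≤ T := div_nonneg (by linarith) hd.le
    have hub := decay_ub hβ hα1.le hode 0 T c hT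
      (fun t ht => (hinv t ht.1).1) (fun t ht => (hcon t ht.1).le)
    have hTval : β * (σs - c) * T = σ0 ^ (-β) + 1 := by
      rw [hTdef]; field_simp [hd.ne', (sub_pos.2 hcs).ne']
    have hTpos : 0 < σ T ^ (-β) := Real.rpow_pos_of_pos (hinv T hT).1 _
    rw [hinit] at hub
    rw [show T - 0 = T from sub_zero T] at hub
    linarith
  obtain ⟨t', ht'1, ht'2⟩ := hne
  set S : Set ℝ := Ici 0 ∩ σ ⁻¹' (Ici c) with hSdef
  have hSne : S.Nonempty := ⟨t', ht'1, ht'2⟩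
  have hScl : IsClosed S := isClosed_Ici.inter (isClosed_Ici.preimage hcont)
  have hSbd : BddBelow S := ⟨0, fun x hx => hx.1⟩
  set tc := sInf S with htcdef
  have htcS : tc ∈ S := hScl.csInf_mem hSne hSbd
  have htcpos : 0 < tc := by
    rcases lt_or_eq_of_le (Set.mem_Ici.1 htcS.1) with h | h
    · exact h
    · exfalso
      have h2 : c ≤ σ tc := htcS.2
      rw [← h, hinit] at h2
      linarith
  have hlt : ∀ u ∈ Ico (0:ℝ) tc, σ u < c := by
    intro u hu
    by_contra h
    push_neg at h
    have huS : u ∈ S := ⟨hu.1, h⟩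
    have := csInf_le hSbd huS
    rw [← htcdef] at this
    linarith [hu.2]
  have heq : σ tc = c := by
    refine le_antisymm ?_ htcS.2
    have htd : Tendsto σ (𝓝[<] tc) (𝓝 (σ tc)) :=
      (hcont.tendsto tc).mono_left nhdsWithin_le_nhds
    refine le_of_tendsto htd ?_
    filter_upwards [Ioo_mem_nhdsLT_of_mem (show tc ∈ Ioc (0:ℝ) tc from ⟨htcpos, le_refl _⟩)]
      with x hx
    exact (hlt x ⟨hx.1.le, hx.2⟩).le
  exact ⟨tc, htcpos, heq, hlt⟩

end helpers

/-- Coupling: σj(r·t) ≤ σi(t) for t ≥ 0. -/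
private lemma comp_lemma {α r σjs σis : ℝ} {σi σj : ℝ → ℝ} (hr : 1 < r)
    (his : σis = r * σjs)
    (hodei : ∀ t, HasDerivAt σi (σi t ^ α * (σis - σi t)) t)
    (hodej : ∀ t, HasDerivAt σj (σj t ^ α * (σjs - σj t)) t)
    (heq0 : σi 0 = σj 0)
    (hposi : ∀ t, 0 ≤ t → 0 < σi t) :
    ∀ t, 0 ≤ t → σj (r * t) ≤ σi t := by
  set g : ℝ → ℝ := fun t => σi t - σj (r * t) with hgdef
  have hgd : ∀ t, HasDerivAt g
      (σi t ^ α * (σis - σi t) - σj (r * t) ^ α * (σjs - σj (r * t)) * r) t := by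
    intro t
    have h3 : HasDerivAt (fun u : ℝ => r * u) r t := by
      simpa using (hasDerivAt_id t).const_mul r
    have h2 : HasDerivAt (fun u : ℝ => σj (r * u))
        (σj (r * t) ^ α * (σjs - σj (r * t)) * r) t :=
      (hodej (r * t)).comp t h3
    exact (hodei t).sub h2
  have hcg : Continuous g := by
    have := fun t => (hgd t).continuousAt
    exact continuous_iff_continuousAt.2 this
  by_contra hcon
  push_neg at hcon
  obtain ⟨t3, ht3, hg3'⟩ := hcon
  have hg3 : g t3 < 0 := sub_neg.2 hg3'
  set A : Set ℝ := Icc 0 t3 ∩ g ⁻¹' (Ici 0) with hAdef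
  have hg0 : g 0 = 0 := by
    simp only [hgdef, mul_zero]
    rw [heq0, sub_self]
  have hAne : A.Nonempty := ⟨0, ⟨le_refl 0, ht3⟩, by rw [mem_preimage, hg0]; exact Set.mem_Ici.2 (le_refl 0)⟩
  have hAcl : IsClosed A := isClosed_Icc.inter (isClosed_Ici.preimage hcg)
  have hAbd : BddAbove A := ⟨t3, fun x hx => hx.1.2⟩
  set t4 := sSup A with ht4def
  have ht4A : t4 ∈ A := hAcl.csSup_mem hAne hAbd
  have ht4nn : 0 ≤ t4 := ht4A.1.1
  have ht4lt : t4 < t3 := by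
    rcases lt_or_eq_of_le ht4A.1.2 with h | h
    · exact h
    · exfalso; have := ht4A.2; rw [mem_preimage, h] at this; exact absurd hg3 (not_lt.2 this)
  have hneg : ∀ u ∈ Ioc t4 t3, g u < 0 := by
    intro u hu
    by_contra h
    push_neg at h
    have huA : u ∈ A := ⟨⟨le_trans ht4nn hu.1.le, hu.2⟩, h⟩
    have := le_csSup hAbd huA
    rw [← ht4def] at this
    linarith [hu.1]
  have hg4 : g t4 = 0 := by
    refine le_antisymm ?_ ht4A.2
    have htd : Tendsto g (𝓝[>] t4) (𝓝 (g t4)) :=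
      (hcg.tendsto t4).mono_left nhdsWithin_le_nhds
    refine le_of_tendsto htd ?_
    filter_upwards [Ioc_mem_nhdsGT_of_mem (show t4 ∈ Ico t4 t3 from ⟨le_refl _, ht4lt⟩)]
      with x hx
    exact (hneg x hx).le
  set x := σi t4 with hxdef
  have hx : 0 < x := hposi t4 ht4nn
  have hxj : σj (r * t4) = x := by
    have h := hg4
    simp only [hgdef] at h
    linarith
  have hd := hgd t4
  have hdval : σi t4 ^ α * (σis - σi t4) - σj (r * t4) ^ α * (σjs - σj (r * t4)) * r
      = x ^ α * ((r - 1) * x) := by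
    rw [hxj, ← hxdef, his]; ring
  rw [hdval] at hd
  have hdpos : 0 < x ^ α * ((r - 1) * x) :=
    mul_pos (Real.rpow_pos_of_pos hx α) (mul_pos (by linarith) hx)
  have hslope := hasDerivAt_iff_tendsto_slope.1 hd
  have h1 : Tendsto (slope g t4) (𝓝[>] t4) (𝓝 (x ^ α * ((r - 1) * x))) :=
    hslope.mono_left (nhdsWithin_mono _ (fun y hy => ne_of_gt hy))
  have h2 : ∀ᶠ u in 𝓝[>] t4, slope g t4 u ≤ 0 := by
    filter_upwards [Ioc_mem_nhdsGT_of_mem (show t4 ∈ Ico t4 t3 from ⟨le_refl _, ht4lt⟩)]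
      with u hu
    rw [slope_def_field, hg4, sub_zero]
    exact div_nonpos_of_nonpos_of_nonneg (hneg u hu).le (by linarith [hu.1])
  have := le_of_tendsto h1 h2
  linarith

set_option maxHeartbeats 1000000 in
theorem stmt_6 (N : ℕ) (hN : 3 ≤ N) (r σjs σis σ0 s f : ℝ)
    (hr : 1 < r) (hσjs : 0 < σjs) (his : σis = r * σjs)
    (hσ0 : 0 < σ0) (hσ0j : σ0 < σjs)
    (hs : s ∈ Set.Ioo (0 : ℝ) (1/4)) (hf : f ∈ Set.Ioo (3/4 : ℝ) 1)
    (σi σj : ℝ → ℝ)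
    (hodei : ∀ t : ℝ, HasDerivAt σi (σi t ^ (2 - 2 / (N : ℝ)) * (σis - σi t)) t)
    (hodej : ∀ t : ℝ, HasDerivAt σj (σj t ^ (2 - 2 / (N : ℝ)) * (σjs - σj t)) t)
    (hiniti : σi 0 = σ0) (hinitj : σj 0 = σ0)
    (hcond : σ0 ≤ s * σjs *
      ((1 - f) * (r - 1) / (1 + (1 - f) * (r - 1))) ^ ((N : ℝ) / ((N : ℝ) - 2))) :
    ∃ t : ℝ, 0 ≤ t ∧ σj t ≤ s * σjs ∧ f * σis ≤ σi t := by
  obtain ⟨hs0, hs4⟩ := hs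
  obtain ⟨hf3, hf1⟩ := hf
  have hN3 : (3:ℝ) ≤ (N:ℝ) := by exact_mod_cast hN
  have hNpos : (0:ℝ) < (N:ℝ) := by linarith
  have h2N : 2 / (N:ℝ) ≤ 2/3 := by
    rw [div_le_div_iff₀ hNpos (by norm_num)]; linarith
  have h2Npos : 0 < 2 / (N:ℝ) := by positivity
  set α : ℝ := 2 - 2 / (N:ℝ) with hαdef
  have hα1 : 1 < α := by rw [hαdef]; linarith
  have hα0 : (0:ℝ) ≤ α := by linarith
  set β : ℝ := α - 1 with hβdef
  have hβ : β = α - 1 := hβdef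
  have hβpos : 0 < β := by rw [hβdef]; linarith
  -- constants
  set K : ℝ := (1 - f) * (r - 1) with hKdef
  have hK : 0 < K := mul_pos (by linarith) (by linarith)
  have h1K : 0 < 1 + K := by linarith
  set ρ : ℝ := K / (1 + K) with hρdef
  have hρ0 : 0 < ρ := div_pos hK h1K
  have hρ1 : ρ < 1 := (div_lt_one h1K).2 (by linarith)
  -- rewrite the exponent
  have hβval : β = ((N:ℝ) - 2) / (N:ℝ) := by
    rw [hβdef, hαdef]; field_simp; ring
  have hexp : (N:ℝ) / ((N:ℝ) - 2) = 1 / β := by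
    rw [hβval, one_div_div]
  rw [hexp] at hcond
  have hcond' : σ0 ≤ s * σjs * ρ ^ (1/β : ℝ) := hcond
  have hsσ : 0 < s * σjs := mul_pos hs0 hσjs
  have hρpow1 : ρ ^ (1/β : ℝ) < 1 :=
    Real.rpow_lt_one hρ0.le hρ1 (by positivity)
  have hρpow0 : 0 < ρ ^ (1/β : ℝ) := Real.rpow_pos_of_pos hρ0 _
  have hσ0s : σ0 < s * σjs := by
    calc σ0 ≤ s * σjs * ρ ^ (1/β : ℝ) := hcond'
      _ < s * σjs * 1 := by
          exact mul_lt_mul_of_pos_left hρpow1 hsσ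
      _ = s * σjs := mul_one _
  set X : ℝ := σ0 ^ (-β) with hXdef
  set W : ℝ := (s * σjs) ^ (-β) with hWdef
  have hXpos : 0 < X := Real.rpow_pos_of_pos hσ0 _
  have hWpos : 0 < W := Real.rpow_pos_of_pos hsσ _
  -- key consequence of hcond : W ≤ ρ * X
  have hWX : W ≤ ρ * X := by
    have h1 : (s * σjs * ρ ^ (1/β : ℝ)) ^ (-β) ≤ σ0 ^ (-β) :=
      Real.rpow_le_rpow_of_nonpos hσ0 hcond' (neg_nonpos.2 hβpos.le)
    have h2 : (s * σjs * ρ ^ (1/β : ℝ)) ^ (-β) = W * ρ⁻¹ := by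
      rw [Real.mul_rpow hsσ.le hρpow0.le, ← Real.rpow_mul hρ0.le]
      have hmul : (1/β) * (-β) = -1 := by field_simp
      rw [hmul, Real.rpow_neg_one, hWdef]
    rw [h2] at h1
    have h3 : W * ρ⁻¹ * ρ ≤ X * ρ := mul_le_mul_of_nonneg_right h1 hρ0.le
    have h4 : W * ρ⁻¹ * ρ = W := by field_simp
    rw [h4] at h3
    linarith
  -- invariance for σi and σj
  have hσis : 0 < σis := by rw [his]; positivity
  have hrσ : σjs < r * σjs := by
    have := mul_lt_mul_of_pos_right hr hσjs
    linarith
  have hσ0is : σ0 < σis := by rw [his]; linarith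
  have hinvi := inv_lemma (σ0 := σ0) (σs := σis) hα0 hσ0 hσ0is hodei hiniti
  have hinvj := inv_lemma (σ0 := σ0) (σs := σjs) hα0 hσ0 hσ0j hodej hinitj
  -- hitting times for σi
  have hsσj : s * σjs < σjs := by
    have := mul_lt_mul_of_pos_right (show s < 1 by linarith) hσjs
    linarith
  have hsjs_lt_σis : s * σjs < σis := by rw [his]; linarith
  have hsjs_lt_fσis : s * σjs < f * σis := by
    have h1 : s * σjs < (3/4 : ℝ) * σjs :=
      mul_lt_mul_of_pos_right (by linarith) hσjs
    have h2 : (3/4 : ℝ) * σjs < f * σjs := mul_lt_mul_of_pos_right hf3 hσjs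
    have h3 : f * σjs < f * (r * σjs) := mul_lt_mul_of_pos_left hrσ (by linarith)
    rw [his]; linarith
  have hfσis_lt : f * σis < σis := by
    have := mul_lt_mul_of_pos_right hf1 hσis
    linarith
  have hσ0f : σ0 < f * σis := lt_trans hσ0s hsjs_lt_fσis
  obtain ⟨t1, ht1pos, heq1, hlt1⟩ :=
    hit hβ hα1 hσ0 hσ0is hodei hiniti (s * σjs) hσ0s hsjs_lt_σis
  obtain ⟨t2, ht2pos, heq2, hlt2⟩ :=
    hit hβ hα1 hσ0 hσ0is hodei hiniti (f * σis) hσ0f hfσis_lt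
  have ht12 : t1 ≤ t2 := by
    by_contra h
    push_neg at h
    have := hlt1 t2 ⟨ht2pos.le, h⟩
    rw [heq2] at this
    linarith
  -- lower bound on t1
  have hlb := decay_lb hβ hα1.le hodei 0 t1 ht1pos.le
    (fun t ht => (hinvi t ht.1).1)
  rw [hiniti, heq1, sub_zero] at hlb
  have e2 : X - W ≤ β * σis * t1 := by
    rw [hXdef, hWdef]; linarith
  -- upper bound on t2 - t1
  have hub := decay_ub hβ hα1.le hodei t1 t2 (f * σis) ht12
    (fun t ht => (hinvi t (le_trans ht1pos.le ht.1)).1)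
    (fun t ht => by
      rcases eq_or_lt_of_le ht.2 with h | h
      · rw [h, heq2]
      · exact (hlt2 t ⟨le_trans ht1pos.le ht.1, h⟩).le)
  rw [heq1, heq2] at hub
  have hZpos : 0 < (f * σis) ^ (-β) := Real.rpow_pos_of_pos (by positivity) _
  have e1 : β * (σis - f * σis) * (t2 - t1) ≤ W := by
    rw [hWdef]; linarith
  -- derive t2 ≤ r * t1
  have h5 : W * (1 + K) ≤ K * X := by
    have h6 := mul_le_mul_of_nonneg_right hWX h1K.le
    have h7 : ρ * X * (1 + K) = K * X := by
      rw [hρdef]; field_simp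
    linarith
  have h7 : W ≤ K * (X - W) := by
    have e : W * (1 + K) = W + K * W := by ring
    have e2 : K * (X - W) = K * X - K * W := by ring
    linarith
  have hf0 : (0:ℝ) < 1 - f := by linarith
  have step : (1 - f) * (β * σis * (t2 - t1)) ≤ (1 - f) * ((r - 1) * (β * σis * t1)) := by
    calc (1 - f) * (β * σis * (t2 - t1)) = β * (σis - f * σis) * (t2 - t1) := by ring
      _ ≤ W := e1
      _ ≤ K * (X - W) := h7
      _ = (1 - f) * ((r - 1) * (X - W)) := by rw [hKdef]; ring
      _ ≤ (1 - f) * ((r - 1) * (β * σis * t1)) := by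
          apply mul_le_mul_of_nonneg_left _ hf0.le
          exact mul_le_mul_of_nonneg_left e2 (by linarith)
  have step2 : β * σis * (t2 - t1) ≤ (r - 1) * (β * σis * t1) :=
    le_of_mul_le_mul_left step hf0
  have c2pos : 0 < β * σis := mul_pos hβpos hσis
  have step2' : β * σis * (t2 - t1) ≤ β * σis * ((r - 1) * t1) := by linarith [step2]
  have ht2rt1 : t2 ≤ r * t1 := by
    have := le_of_mul_le_mul_left step2' c2pos
    linarith
  -- comparison and monotonicity of σj
  have hcomp := comp_lemma hr his hodei hodej (by rw [hiniti, hinitj])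
    (fun t ht => (hinvi t ht).1) t1 ht1pos.le
  have hmonoj := sigma_mono hα0 hσ0 hσ0j hodej hinitj
  refine ⟨t2, ht2pos.le, ?_, ?_⟩
  · have h1 : σj t2 ≤ σj (r * t1) :=
      hmonoj (Set.mem_Ici.2 ht2pos.le)
        (Set.mem_Ici.2 (mul_nonneg (by linarith) ht1pos.le)) ht2rt1
    rw [heq1] at hcomp
    linarith
  · rw [heq2]
end

section
/- For the recurrence r(t+1) = r(t)·(1 + (c/N)·r(t)^{1-2/N}·(1 - r(t)))^N with 0 < c ≤ 1, integer N ≥ 2, and 0 < r(0) < 1, the iterates satisfy r(t) ≤ 1 for all t. -/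
theorem stmt_9 (N : ℕ) (hN : 2 ≤ N) (c : ℝ) (hc0 : 0 < c) (hc1 : c ≤ 1)
    (r : ℕ → ℝ) (h0 : 0 < r 0) (h1 : r 0 < 1)
    (hrec : ∀ t : ℕ, r (t + 1) =
      r t * (1 + (c / N) * r t ^ (1 - 2 / (N : ℝ)) * (1 - r t)) ^ N) :
    ∀ t : ℕ, r t ≤ 1 := by
  have hNR : (0:ℝ) < N := by positivity
  have key : ∀ t : ℕ, 0 < r t ∧ r t ≤ 1 := by
    intro t
    induction t with
    | zero => exact ⟨h0, h1.le⟩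
    | succ n ih =>
      obtain ⟨hpos, hle⟩ := ih
      set a : ℝ := 1 - 2 / (N : ℝ) with ha
      have ha0 : 0 ≤ a := by
        have : 2 / (N : ℝ) ≤ 1 := by
          rw [div_le_one hNR]
          exact_mod_cast hN
        rw [ha]; linarith
      have hra1 : r n ^ a ≤ 1 := Real.rpow_le_one hpos.le hle ha0
      have hra0 : 0 ≤ r n ^ a := Real.rpow_nonneg hpos.le a
      set x : ℝ := (c / N) * r n ^ a * (1 - r n) with hx
      have hx0 : 0 ≤ x := by
        apply mul_nonneg
        · positivity
        · linarith
      have hfpos : (0:ℝ) < 1 + x := by linarith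
      have hstep : r (n + 1) = r n * (1 + x) ^ N := hrec n
      constructor
      · rw [hstep]; positivity
      · rw [hstep]
        have h1 : (1 + x) ^ N ≤ Real.exp x ^ N := by
          apply pow_le_pow_left₀ hfpos.le
          linarith [Real.add_one_le_exp x]
        have h2 : Real.exp x ^ N = Real.exp (N * x) := by
          rw [← Real.exp_nat_mul]
        have hNx : (N : ℝ) * x ≤ 1 - r n := by
          have : (N : ℝ) * x = c * (r n ^ a * (1 - r n)) := by
            rw [hx]; field_simp
          rw [this]
          have hq : r n ^ a * (1 - r n) ≤ 1 - r n := by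
            nlinarith
          nlinarith
        have h3 : r n * (1 + x) ^ N ≤ r n * Real.exp (1 - r n) := by
          apply mul_le_mul_of_nonneg_left _ hpos.le
          calc (1 + x) ^ N ≤ Real.exp x ^ N := h1
            _ = Real.exp (N * x) := h2
            _ ≤ Real.exp (1 - r n) := Real.exp_le_exp.mpr hNx
        have h4 : r n * Real.exp (1 - r n) ≤ 1 := by
          have hr : r n ≤ Real.exp (r n - 1) := by
            linarith [Real.add_one_le_exp (r n - 1)]
          calc r n * Real.exp (1 - r n) ≤ Real.exp (r n - 1) * Real.exp (1 - r n) := by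
                apply mul_le_mul_of_nonneg_right hr (Real.exp_nonneg _)
            _ = 1 := by rw [← Real.exp_add]; norm_num
        linarith
  exact fun t => (key t).2
end

section
/- For every real r with 0 ≤ r ≤ 1 and integer N ≥ 2, r·exp(r^{1-2/N}·(1-r)) ≤ 1. -/
theorem stmt_10 (N : ℕ) (hN : 2 ≤ N) (r : ℝ) (h0 : 0 ≤ r) (h1 : r ≤ 1) :
    r * Real.exp (r ^ (1 - 2 / (N : ℝ)) * (1 - r)) ≤ 1 := by
  have hNpos : (0:ℝ) < N := by positivity
  have ha : (0:ℝ) ≤ 1 - 2 / (N : ℝ) := by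
    rw [sub_nonneg, div_le_one hNpos]
    exact_mod_cast hN
  have hr1 : r ^ (1 - 2 / (N : ℝ)) ≤ 1 := Real.rpow_le_one h0 h1 ha
  have hexp : r ^ (1 - 2 / (N : ℝ)) * (1 - r) ≤ 1 - r := by
    nlinarith [Real.rpow_nonneg h0 (1 - 2 / (N : ℝ))]
  calc r * Real.exp (r ^ (1 - 2 / (N : ℝ)) * (1 - r))
      ≤ r * Real.exp (1 - r) := by
        exact mul_le_mul_of_nonneg_left (Real.exp_le_exp.mpr hexp) h0
    _ ≤ Real.exp (r - 1) * Real.exp (1 - r) := by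
        exact mul_le_mul_of_nonneg_right (by linarith [Real.add_one_le_exp (r - 1)])
          (Real.exp_pos _).le
    _ = 1 := by rw [← Real.exp_add]; ring_nf; exact Real.exp_zero
end

section
/- Consider the recurrence σ(t+1) = σ(t)·(1 + (c/2)·R·(1 - σ(t)/σ*))² with 0 < c < 2(√2 - 1), 0 < R ≤ 1, 0 < σ(0) = σ₀ < σ*. Then for all t ≥ 0, 1/σ(t) - 1/σ* ≥ (1/σ₀ - 1/σ*)·(1 - cR - (c²/4)R²)^t. -/
theorem stmt_11 (c R σs σ0 : ℝ)
    (hc0 : 0 < c) (hc1 : c < 2 * (Real.sqrt 2 - 1))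
    (hR0 : 0 < R) (hR1 : R ≤ 1) (hσ0 : 0 < σ0) (hσ0s : σ0 < σs)
    (σ : ℕ → ℝ) (hinit : σ 0 = σ0)
    (hrec : ∀ t : ℕ, σ (t + 1) = σ t * (1 + (c / 2) * R * (1 - σ t / σs)) ^ 2) :
    ∀ t : ℕ, (1 / σ0 - 1 / σs) * (1 - c * R - (c ^ 2 / 4) * R ^ 2) ^ t ≤
      1 / σ t - 1 / σs := by
  have hσs : 0 < σs := hσ0.trans hσ0s
  have ha0 : 0 < c * R / 2 := by positivity
  have hs2 : Real.sqrt 2 ^ 2 = 2 := Real.sq_sqrt (by norm_num)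
  have hs0 : (0:ℝ) ≤ Real.sqrt 2 := Real.sqrt_nonneg 2
  have hq0 : 0 < 1 - c * R - c ^ 2 / 4 * R ^ 2 := by
    nlinarith [hs2, hs0, mul_pos hc0 hR0, sq_nonneg (R - 1), mul_pos (mul_pos hc0 hc0) hR0,
      mul_pos (mul_pos (mul_pos hc0 hc0) hR0) hR0]
  have main : ∀ t : ℕ, (0 < σ t ∧ σ t ≤ σs) ∧
      (1 / σ0 - 1 / σs) * (1 - c * R - (c ^ 2 / 4) * R ^ 2) ^ t ≤ 1 / σ t - 1 / σs := by
    intro t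
    induction t with
    | zero =>
      refine ⟨⟨by rw [hinit]; exact hσ0, by rw [hinit]; exact hσ0s.le⟩, ?_⟩
      rw [hinit, pow_zero, mul_one]
    | succ t ih =>
      obtain ⟨⟨hx0, hxs⟩, hIH⟩ := ih
      set a : ℝ := c * R / 2 with ha_def
      set x := σ t with hx_def
      set u : ℝ := 1 - x / σs with hu_def
      have hu0 : 0 ≤ u := by
        rw [hu_def, sub_nonneg]
        exact (div_le_one hσs).mpr hxs
      have hx_eq : x = σs * (1 - u) := by
        rw [hu_def]; field_simp; ring
      have h1u : 0 < 1 - u := by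
        have h := hx_eq ▸ hx0
        rcases mul_pos_iff.mp h with ⟨_, h2⟩ | ⟨h2, _⟩
        · exact h2
        · linarith
      have hv : 0 < 1 + a * u := by nlinarith [mul_nonneg ha0.le hu0]
      have hkey : (1 + a * u) ^ 2 * (1 - (2 * a + a ^ 2) * u) ≤ 1 := by
        nlinarith [mul_nonneg (mul_nonneg ha0.le ha0.le) hu0,
          mul_nonneg (mul_nonneg ha0.le ha0.le) (mul_nonneg hu0 hu0),
          mul_nonneg (mul_nonneg (mul_nonneg ha0.le ha0.le) ha0.le) (mul_nonneg hu0 hu0),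
          mul_nonneg (mul_nonneg (mul_nonneg ha0.le ha0.le) ha0.le)
            (mul_nonneg (mul_nonneg hu0 hu0) hu0),
          mul_nonneg (mul_nonneg (mul_nonneg (mul_nonneg ha0.le ha0.le) ha0.le) ha0.le)
            (mul_nonneg (mul_nonneg hu0 hu0) hu0)]
      have hrec' : σ (t + 1) = x * (1 + a * u) ^ 2 := by
        rw [hrec t, hu_def, ha_def]; ring
      have hy0 : 0 < σ (t + 1) := by rw [hrec']; positivity
      have hstep : (1 - c * R - c ^ 2 / 4 * R ^ 2) * (1 / x - 1 / σs)
          ≤ 1 / σ (t + 1) - 1 / σs := by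
        have hq_eq : 1 - c * R - c ^ 2 / 4 * R ^ 2 = 1 - 2 * a - a ^ 2 := by
          rw [ha_def]; ring
        rw [hrec', hx_eq, hq_eq, ← sub_nonneg]
        have hvne : (1 + a * u) ≠ 0 := ne_of_gt hv
        have h1une : (1 - u) ≠ 0 := ne_of_gt h1u
        have hsne : σs ≠ 0 := ne_of_gt hσs
        have hdiff : 1 / (σs * (1 - u) * (1 + a * u) ^ 2) - 1 / σs
            - (1 - 2 * a - a ^ 2) * (1 / (σs * (1 - u)) - 1 / σs)
            = (1 - (1 + a * u) ^ 2 * (1 - (2 * a + a ^ 2) * u))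
              / (σs * (1 - u) * (1 + a * u) ^ 2) := by
          field_simp
          ring
        rw [hdiff]
        apply div_nonneg (by linarith) (by positivity)
      have hmono : 1 / σs ≤ 1 / x := one_div_le_one_div_of_le hx0 hxs
      have h1 : 0 ≤ 1 / x - 1 / σs := by linarith
      have hys : σ (t + 1) ≤ σs := by
        have h3 : 0 ≤ (1 - c * R - c ^ 2 / 4 * R ^ 2) * (1 / x - 1 / σs) :=
          mul_nonneg hq0.le h1
        have h2 : 1 / σs ≤ 1 / σ (t + 1) := by linarith
        rw [div_le_div_iff₀ hσs hy0] at h2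
        linarith
      refine ⟨⟨hy0, hys⟩, ?_⟩
      calc (1 / σ0 - 1 / σs) * (1 - c * R - (c ^ 2 / 4) * R ^ 2) ^ (t + 1)
          = (1 - c * R - c ^ 2 / 4 * R ^ 2) * ((1 / σ0 - 1 / σs)
              * (1 - c * R - (c ^ 2 / 4) * R ^ 2) ^ t) := by ring
        _ ≤ (1 - c * R - c ^ 2 / 4 * R ^ 2) * (1 / x - 1 / σs) :=
            mul_le_mul_of_nonneg_left hIH hq0.le
        _ ≤ 1 / σ (t + 1) - 1 / σs := hstep
  exact fun t => (main t).2
end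

section
/- Consider the recurrence σ(t+1) = σ(t)·(1 + (c/2)·R·(1 - σ(t)/σ*))² with 0 < c < 2(√2 - 1), 0 < R ≤ 1, 0 < σ(0) = σ₀ < σ*. Then for all t ≥ 0, 1/σ(t) - 1/σ* ≤ (1/σ₀ - 1/σ*)·(1 - cR + c²R²)^t. -/
lemma stmt_12_aux1 (k v : ℝ) (hk0 : 0 < k) (hk1 : k < 1/2) (hv0 : 0 ≤ v) :
    (1 - v) * (1 + k*v)^2 ≤ 1 := by
  nlinarith [mul_nonneg hv0 (by linarith : (0:ℝ) ≤ 1 - 2*k),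
    mul_nonneg (mul_nonneg hv0 hv0) (by nlinarith : (0:ℝ) ≤ 2*k - k^2),
    mul_nonneg (mul_nonneg (mul_nonneg hv0 hv0) hv0) (sq_nonneg k)]

lemma stmt_12_aux2 (k v : ℝ) (hk0 : 0 < k) (hk1 : k < 1/2) (hv0 : 0 ≤ v) (hv1 : v ≤ 1) :
    (1 - k*v + (k*v)^2)^2 ≤ 1 - 2*(k*v) + 4*k^2*v := by
  have h : 0 ≤ 4 - 3*v + 2*k*v^2 - k^2*v^3 := by
    nlinarith [mul_nonneg (mul_nonneg hk0.le hv0) hv0,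
      mul_nonneg (mul_nonneg (mul_nonneg hk0.le hk0.le) hv0) hv0]
  nlinarith [mul_nonneg (mul_nonneg (sq_nonneg k) hv0) h]

lemma stmt_12_aux3 (x : ℝ) (hx0 : 0 ≤ x) : (1:ℝ) ≤ ((1-x+x^2)*(1+x))^2 := by
  have h : (1-x+x^2)*(1+x) = 1+x^3 := by ring
  rw [h]
  nlinarith [pow_nonneg hx0 3]

theorem stmt_12 (c R σs σ0 : ℝ)
    (hc0 : 0 < c) (hc1 : c < 2 * (Real.sqrt 2 - 1))
    (hR0 : 0 < R) (hR1 : R ≤ 1) (hσ0 : 0 < σ0) (hσ0s : σ0 < σs)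
    (σ : ℕ → ℝ) (hinit : σ 0 = σ0)
    (hrec : ∀ t : ℕ, σ (t + 1) = σ t * (1 + (c / 2) * R * (1 - σ t / σs)) ^ 2) :
    ∀ t : ℕ, 1 / σ t - 1 / σs ≤
      (1 / σ0 - 1 / σs) * (1 - c * R + c ^ 2 * R ^ 2) ^ t := by
  have hσs : 0 < σs := hσ0.trans hσ0s
  have hsqrt : Real.sqrt 2 < 1.5 := by
    nlinarith [Real.sq_sqrt (by norm_num : (0:ℝ) ≤ 2), Real.sqrt_nonneg 2]
  have hcR : c * R ≤ c := by nlinarith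
  have hcR1 : c * R < 1 := by nlinarith
  have hcR0 : 0 < c * R := mul_pos hc0 hR0
  set k : ℝ := c * R / 2 with hk
  have hk0 : 0 < k := by positivity
  have hk1 : k < 1/2 := by rw [hk]; linarith
  set q : ℝ := 1 - c * R + c ^ 2 * R ^ 2 with hq
  have hq2 : q = 1 - 2*k + 4*k^2 := by rw [hq, hk]; ring
  have hq0 : 0 < q := by nlinarith [sq_nonneg (c*R - 1/2)]
  have key : ∀ t, 0 < σ t ∧ σ t ≤ σs ∧ (1/σ t - 1/σs ≤ (1/σ0 - 1/σs) * q ^ t) := by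
    intro t
    induction t with
    | zero =>
      refine ⟨by rw [hinit]; exact hσ0, by rw [hinit]; exact hσ0s.le, ?_⟩
      simp [hinit]
    | succ t ih =>
      obtain ⟨hpos, hle, hiter⟩ := ih
      set b := σ t with hb
      set w : ℝ := b / σs with hwdef
      have hw0 : 0 < w := by positivity
      have hw1 : w ≤ 1 := (div_le_one hσs).2 hle
      set x : ℝ := k * (1 - w) with hxdef
      have hx0 : 0 ≤ x := by
        rw [hxdef]; exact mul_nonneg hk0.le (by linarith)
      have hx1 : (0:ℝ) < 1 + x := by linarith
      have hs' : σ (t+1) = b * (1 + x)^2 := by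
        rw [hrec t, hxdef, hwdef, hk]; ring
      have hpos' : 0 < σ (t+1) := by
        rw [hs']; exact mul_pos hpos (pow_pos hx1 2)
      have hb1 : w * (1 + x)^2 ≤ 1 := by
        calc w * (1 + x)^2 = (1 - (1-w)) * (1 + k*(1-w))^2 := by rw [hxdef]; ring
          _ ≤ 1 := stmt_12_aux1 k (1-w) hk0 hk1 (by linarith)
      have hle' : σ (t+1) ≤ σs := by
        rw [hs']
        have hbw : b = w * σs := by rw [hwdef]; field_simp
        calc b * (1 + x)^2 = (w * (1+x)^2) * σs := by rw [hbw]; ring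
          _ ≤ 1 * σs := mul_le_mul_of_nonneg_right hb1 hσs.le
          _ = σs := one_mul σs
      have hcore : (1 - x + x^2)^2 ≤ w + (1 - w) * q := by
        calc (1 - x + x^2)^2 = (1 - k*(1-w) + (k*(1-w))^2)^2 := by rw [hxdef]
          _ ≤ 1 - 2*(k*(1-w)) + 4*k^2*(1-w) :=
              stmt_12_aux2 k (1-w) hk0 hk1 (by linarith) (by linarith)
          _ = w + (1 - w) * q := by rw [hq2]; ring
      have h1 : 1/(b*(1+x)^2) ≤ (1-x+x^2)^2/b := by
        rw [div_le_div_iff₀ (by positivity) hpos]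
        nlinarith [mul_le_mul_of_nonneg_left (stmt_12_aux3 x hx0) hpos.le]
      have h2 : (1-x+x^2)^2/b ≤ (w + (1-w)*q)/b := by gcongr
      have h3 : (w + (1-w)*q)/b = 1/σs + (1/b - 1/σs)*q := by
        rw [hwdef]; field_simp
      have hmain : 1/(σ (t+1)) - 1/σs ≤ (1/b - 1/σs) * q := by
        rw [hs']; linarith [h1, h2, h3.le]
      refine ⟨hpos', hle', ?_⟩
      calc 1/σ (t+1) - 1/σs ≤ (1/b - 1/σs) * q := hmain
        _ ≤ ((1/σ0 - 1/σs) * q ^ t) * q := mul_le_mul_of_nonneg_right hiter hq0.le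
        _ = (1/σ0 - 1/σs) * q ^ (t+1) := by ring
  intro t
  exact (key t).2.2
end

section
/- Let W₁(t), ..., W_N(t) be d×d matrices evolving under gradient flow of ℓ(W) = (1/2N)‖W_N⋯W₁ - W*‖_F², with W* symmetric PSD with eigendecomposition W* = UᵀD*U, and initialization Wₙ(0) = σ₀^{1/N}·I for all n with σ₀ > 0. Then each matrix Dₙ(t) = U Wₙ(t) Uᵀ remains diagonal for all t, and the singular values σᵢ(t) of W(t) = W_N(t)⋯W₁(t) satisfy σᵢ'(t) = σᵢ(t)^{2-2/N}(σᵢ*(t) - σᵢ(t)), where σᵢ* are the eigenvalues of W*. -/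
open Matrix Set

section helpers
variable {E : Type*} [NormedAddCommGroup E] [NormedSpace ℝ E]

theorem aux_gronwall_right {y y' : ℝ → E} {K a b : ℝ}
    (hd : ∀ t ∈ Icc a b, HasDerivAt y (y' t) t)
    (hbnd : ∀ t ∈ Icc a b, ‖y' t‖ ≤ K * ‖y t‖)
    (h0 : y a = 0) : ∀ t ∈ Icc a b, y t = 0 := by
  intro t ht
  have h := norm_le_gronwallBound_of_norm_deriv_right_le (f := y) (f' := y') (δ := 0) (K := K)
    (ε := 0) (a := a) (b := b)
    (fun s hs => (hd s hs).continuousAt.continuousWithinAt)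
    (fun s hs => ((hd s (Ico_subset_Icc_self hs)).hasDerivWithinAt))
    (by simp [h0])
    (fun s hs => by simpa using hbnd s (Ico_subset_Icc_self hs))
  have := h t ht
  rw [gronwallBound_ε0_δ0] at this
  exact norm_le_zero_iff.mp this

theorem aux_ode_zero {y y' : ℝ → E} {a : ℝ}
    (hd : ∀ t : ℝ, HasDerivAt y (y' t) t)
    (hK : ∀ r : ℝ, 0 ≤ r → ∃ K, ∀ t ∈ Icc (a - r) (a + r), ‖y' t‖ ≤ K * ‖y t‖)
    (h0 : y a = 0) : ∀ t : ℝ, y t = 0 := by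
  intro t
  set r : ℝ := |t - a| with hr
  have hr0 : 0 ≤ r := abs_nonneg _
  obtain ⟨K, hKb⟩ := hK r hr0
  rcases le_total a t with hat | hta
  · have ht : t ∈ Icc a (a + r) := by
      constructor
      · exact hat
      · have : t - a ≤ r := le_abs_self _
        linarith
    exact aux_gronwall_right (fun s hs => hd s)
      (fun s hs => hKb s ⟨by linarith [hs.1], hs.2⟩) h0 t ht
  · set z : ℝ → E := fun s => y (2 * a - s) with hz
    set z' : ℝ → E := fun s => -(y' (2 * a - s)) with hz'
    have hdz : ∀ s : ℝ, HasDerivAt z (z' s) s := by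
      intro s
      have hg : HasDerivAt (fun u : ℝ => 2 * a - u) (-1) s :=
        (hasDerivAt_id s).const_sub (2 * a)
      have := (hd (2 * a - s)).scomp s (h := fun u : ℝ => 2 * a - u) hg
      simpa [z, z', Function.comp_def] using this
    have hz0 : z a = 0 := by simp [z, two_mul, h0]
    have key : ∀ s ∈ Icc a (a + r), z s = 0 := by
      refine aux_gronwall_right (K := K) (fun s _ => hdz s) ?_ hz0
      intro s hs
      have hmem : 2 * a - s ∈ Icc (a - r) (a + r) := by
        constructor <;> [linarith [hs.2]; linarith [hs.1]]
      simpa [z, z'] using hKb _ hmem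
    have hmem : 2 * a - t ∈ Icc a (a + r) := by
      have : a - t ≤ r := by rw [hr, abs_sub_comm]; exact le_abs_self _
      constructor <;> linarith
    have := key _ hmem
    simpa [z] using this

theorem aux_exists_lip [ProperSpace E] {F : Type*} [NormedAddCommGroup F] [NormedSpace ℝ F]
    {f : E → F} (hf : ContDiff ℝ 1 f) (R : ℝ) :
    ∃ L : NNReal, LipschitzOnWith L f (Metric.closedBall 0 R) := by
  obtain ⟨C, hC⟩ := (isCompact_closedBall (0 : E) R).exists_bound_of_continuousOn
    ((hf.continuous_fderiv one_ne_zero).continuousOn)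
  refine ⟨C.toNNReal, Convex.lipschitzOnWith_of_nnnorm_fderiv_le
    (fun x _ => hf.differentiable one_ne_zero x) ?_ (convex_closedBall 0 R)⟩
  intro x hx
  have := hC x hx
  rw [← norm_toNNReal]
  exact Real.toNNReal_mono this

theorem aux_listprod_entry_contDiff {E' : Type*} [NormedAddCommGroup E'] [NormedSpace ℝ E']
    {d' : ℕ} (l : List (E' → Matrix (Fin d') (Fin d') ℝ))
    (hl : ∀ f ∈ l, ∀ i j, ContDiff ℝ 1 fun x => f x i j) :
    ∀ i j, ContDiff ℝ 1 fun x => (l.map (fun f => f x)).prod i j := by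
  induction l with
  | nil => intro i j; simp only [List.map_nil, List.prod_nil, Matrix.one_apply]; exact contDiff_const
  | cons f l ih =>
    intro i j
    simp only [List.map_cons, List.prod_cons, Matrix.mul_apply]
    exact ContDiff.sum fun k _ =>
      ((hl f List.mem_cons_self i k).mul
        (ih (fun g hg i j => hl g (List.mem_cons_of_mem _ hg) i j) k j))

theorem aux_coord_contDiff {N d : ℕ} (k : Fin N) (i j : Fin d) :
    ContDiff ℝ 1 fun x : Fin N → Fin d → Fin d → ℝ => x k i j := by
  exact ((ContinuousLinearMap.proj (R := ℝ) (φ := fun _ : Fin d => ℝ) j).comp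
    ((ContinuousLinearMap.proj (R := ℝ) (φ := fun _ : Fin d => Fin d → ℝ) i).comp
      (ContinuousLinearMap.proj (R := ℝ) (φ := fun _ : Fin N => Fin d → Fin d → ℝ) k))).contDiff

end helpers

noncomputable def auxG (d N : ℕ) (Dstar : Matrix (Fin d) (Fin d) ℝ)
    (x : Fin N → Fin d → Fin d → ℝ) : Fin N → Fin d → Fin d → ℝ :=
  fun n i j =>
    ((N : ℝ)⁻¹ •
      ((((List.ofFn fun k : Fin N => Matrix.of (x k)).take (n : ℕ)).reverse.prod)ᵀ *
        (Dstar - (List.ofFn fun k : Fin N => Matrix.of (x k)).reverse.prod) *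
        (((List.ofFn fun k : Fin N => Matrix.of (x k)).drop ((n : ℕ) + 1)).reverse.prod)ᵀ)) i j

noncomputable def auxPi (d N : ℕ) (x : Fin N → Fin d → Fin d → ℝ) :
    Fin N → Fin d → Fin d → ℝ :=
  fun _ i j => if i = j then (∑ m, x m i i) / N else 0

theorem auxPi_norm_le (d N : ℕ) (hN : 1 ≤ N) (x : Fin N → Fin d → Fin d → ℝ) :
    ‖auxPi d N x‖ ≤ ‖x‖ := by
  rw [pi_norm_le_iff_of_nonneg (norm_nonneg x)]
  intro n
  rw [pi_norm_le_iff_of_nonneg (norm_nonneg x)]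
  intro i
  rw [pi_norm_le_iff_of_nonneg (norm_nonneg x)]
  intro j
  by_cases h : i = j
  · simp only [auxPi, if_pos h, Real.norm_eq_abs]
    have hb : ∀ m : Fin N, |x m i i| ≤ ‖x‖ := by
      intro m
      calc |x m i i| = ‖x m i i‖ := rfl
        _ ≤ ‖x m i‖ := norm_le_pi_norm (x m i) i
        _ ≤ ‖x m‖ := norm_le_pi_norm (x m) i
        _ ≤ ‖x‖ := norm_le_pi_norm x m
    have h1 : |∑ m, x m i i| ≤ ∑ m : Fin N, ‖x‖ := by
      refine le_trans (Finset.abs_sum_le_sum_abs _ _) ?_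
      exact Finset.sum_le_sum fun m _ => hb m
    rw [Finset.sum_const, Finset.card_univ, Fintype.card_fin] at h1
    rw [abs_div, abs_of_nonneg (by positivity : (0:ℝ) ≤ (N:ℕ))]
    rw [div_le_iff₀ (by positivity : (0:ℝ) < (N:ℕ))]
    calc |∑ m, x m i i| ≤ (N:ℝ) * ‖x‖ := by
          simpa [nsmul_eq_mul] using h1
      _ = ‖x‖ * (N:ℝ) := by ring
  · simp only [auxPi, if_neg h, norm_zero]
    exact norm_nonneg x

theorem auxPi_sub (d N : ℕ) (x y : Fin N → Fin d → Fin d → ℝ) :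
    auxPi d N (x - y) = auxPi d N x - auxPi d N y := by
  funext n i j
  by_cases h : i = j <;>
    simp [auxPi, h, Finset.sum_sub_distrib, sub_div]

theorem auxPi_idem (d N : ℕ) (hN : 1 ≤ N) (x : Fin N → Fin d → Fin d → ℝ) :
    auxPi d N (auxPi d N x) = auxPi d N x := by
  have hNR : (N : ℝ) ≠ 0 := Nat.cast_ne_zero.mpr (by omega)
  funext n i j
  by_cases h : i = j
  · simp only [auxPi, if_pos h, Finset.sum_const, Finset.card_univ, Fintype.card_fin,
      nsmul_eq_mul, ↓reduceIte]
    field_simp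
  · simp [auxPi, h]

theorem aux_keyComp (d N : ℕ) (Dstar : Matrix (Fin d) (Fin d) ℝ) (hD : Dstar.IsDiag)
    (x : Fin N → Fin d → Fin d → ℝ) (δ : Fin d → ℝ)
    (hx : ∀ k, Matrix.of (x k) = Matrix.diagonal δ) (n : Fin N) (i j : Fin d) :
    auxG d N Dstar x n i j =
      if i = j then (N : ℝ)⁻¹ * (δ i ^ (N - 1) * (Dstar i i - δ i ^ N)) else 0 := by
  have hlist : (List.ofFn fun k : Fin N => Matrix.of (x k)) =
      List.replicate N (Matrix.diagonal δ) := by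
    rw [show (fun k : Fin N => Matrix.of (x k)) = fun _ => Matrix.diagonal δ from funext hx,
      List.ofFn_const]
  have hDstar : Dstar = Matrix.diagonal Dstar.diag := hD.diagonal_diag.symm
  rw [auxG]
  rw [hlist]
  conv_lhs => rw [hDstar]
  simp only [List.take_replicate, List.drop_replicate, List.reverse_replicate,
    List.prod_replicate, Matrix.diagonal_pow, Matrix.diagonal_transpose,
    Matrix.diagonal_sub, Matrix.diagonal_mul_diagonal, Matrix.smul_apply]
  have hmin : (n : ℕ) ⊓ N = (n : ℕ) := min_eq_left (le_of_lt n.isLt)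
  rw [hmin]
  by_cases h : i = j
  · subst h
    rw [Matrix.diagonal_apply_eq, if_pos rfl, smul_eq_mul]
    have harith : (n : ℕ) + (N - ((n : ℕ) + 1)) = N - 1 := by omega
    congr 1
    simp only [Pi.mul_apply, Pi.sub_apply, Pi.pow_apply, Matrix.diag_apply]
    rw [show δ i ^ (n:ℕ) * (Dstar i i - δ i ^ N) * δ i ^ (N - ((n:ℕ)+1))
        = δ i ^ ((n:ℕ) + (N - ((n:ℕ)+1))) * (Dstar i i - δ i ^ N) by rw [pow_add]; ring,
      harith]
  · rw [Matrix.diagonal_apply_ne _ h, if_neg h, smul_eq_mul, mul_zero]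

theorem aux_invariance (d N : ℕ) (hN : 1 ≤ N) (Dstar : Matrix (Fin d) (Fin d) ℝ)
    (hD : Dstar.IsDiag) (x : Fin N → Fin d → Fin d → ℝ) (hx : auxPi d N x = x) :
    auxPi d N (auxG d N Dstar x) = auxG d N Dstar x := by
  have hNR : (N : ℝ) ≠ 0 := Nat.cast_ne_zero.mpr (by omega)
  set δ : Fin d → ℝ := fun i => (∑ m, x m i i) / N with hδ
  have hxk : ∀ k, Matrix.of (x k) = Matrix.diagonal δ := by
    intro k
    ext i j
    have hk := congrFun (congrFun (congrFun hx k) i) j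
    by_cases h : i = j
    · subst h
      rw [Matrix.of_apply, Matrix.diagonal_apply_eq]
      rw [← hk]
      simp [auxPi, hδ]
    · rw [Matrix.of_apply, Matrix.diagonal_apply_ne _ h, ← hk]
      simp [auxPi, h]
  funext n i j
  by_cases h : i = j
  · subst h
    simp only [auxPi, if_pos rfl, ↓reduceIte]
    have hsum : ∀ m : Fin N, auxG d N Dstar x m i i
        = (N:ℝ)⁻¹ * (δ i ^ (N - 1) * (Dstar i i - δ i ^ N)) := by
      intro m; rw [aux_keyComp d N Dstar hD x δ hxk m i i, if_pos rfl]
    rw [aux_keyComp d N Dstar hD x δ hxk n i i, if_pos rfl]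
    rw [Finset.sum_congr rfl fun m _ => hsum m, Finset.sum_const, Finset.card_univ,
      Fintype.card_fin, nsmul_eq_mul]
    field_simp
  · simp only [auxPi, if_neg h]
    rw [aux_keyComp d N Dstar hD x δ hxk n i j, if_neg h]

theorem auxG_contDiff (d N : ℕ) (Dstar : Matrix (Fin d) (Fin d) ℝ) :
    ContDiff ℝ 1 (auxG d N Dstar) := by
  rw [contDiff_pi]; intro n
  rw [contDiff_pi]; intro i
  rw [contDiff_pi]; intro j
  set l0 : List ((Fin N → Fin d → Fin d → ℝ) → Matrix (Fin d) (Fin d) ℝ) :=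
    List.ofFn (fun k : Fin N => fun y : Fin N → Fin d → Fin d → ℝ => Matrix.of (y k)) with hl0
  have hmem : ∀ f ∈ l0, ∀ i j, ContDiff ℝ 1 fun x : Fin N → Fin d → Fin d → ℝ => f x i j := by
    intro f hf i j
    rw [hl0, List.mem_ofFn] at hf
    obtain ⟨k, hk⟩ := hf
    rw [← hk]
    exact aux_coord_contDiff k i j
  have hlist : ∀ x : Fin N → Fin d → Fin d → ℝ,
      (List.ofFn fun k : Fin N => Matrix.of (x k)) = l0.map (fun f => f x) := by
    intro x; rw [hl0, List.map_ofFn]; rfl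
  have hA : ∀ i j, ContDiff ℝ 1 fun x : Fin N → Fin d → Fin d → ℝ =>
      (((List.ofFn fun k : Fin N => Matrix.of (x k)).take (n : ℕ)).reverse.prod) i j := by
    intro i j
    have := aux_listprod_entry_contDiff ((l0.take (n : ℕ)).reverse)
      (fun f hf => hmem f (List.take_subset _ _ (List.mem_reverse.mp hf))) i j
    have heq : (fun x : Fin N → Fin d → Fin d → ℝ =>
        (((List.ofFn fun k : Fin N => Matrix.of (x k)).take (n : ℕ)).reverse.prod) i j)
        = fun x => (List.map (fun f => f x) (List.take (↑n) l0).reverse).prod i j :=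
      funext fun x => by rw [hlist x, ← List.map_take, List.map_reverse]
    rw [heq]; exact this
  have hB : ∀ i j, ContDiff ℝ 1 fun x : Fin N → Fin d → Fin d → ℝ =>
      ((List.ofFn fun k : Fin N => Matrix.of (x k)).reverse.prod) i j := by
    intro i j
    have := aux_listprod_entry_contDiff (l0.reverse)
      (fun f hf => hmem f (List.mem_reverse.mp hf)) i j
    have heq : (fun x : Fin N → Fin d → Fin d → ℝ =>
        ((List.ofFn fun k : Fin N => Matrix.of (x k)).reverse.prod) i j)
        = fun x => (List.map (fun f => f x) l0.reverse).prod i j :=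
      funext fun x => by rw [hlist x, List.map_reverse]
    rw [heq]; exact this
  have hC : ∀ i j, ContDiff ℝ 1 fun x : Fin N → Fin d → Fin d → ℝ =>
      (((List.ofFn fun k : Fin N => Matrix.of (x k)).drop ((n : ℕ) + 1)).reverse.prod) i j := by
    intro i j
    have := aux_listprod_entry_contDiff ((l0.drop ((n : ℕ) + 1)).reverse)
      (fun f hf => hmem f (List.drop_subset _ _ (List.mem_reverse.mp hf))) i j
    have heq : (fun x : Fin N → Fin d → Fin d → ℝ =>
        (((List.ofFn fun k : Fin N => Matrix.of (x k)).drop ((n : ℕ) + 1)).reverse.prod) i j)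
        = fun x => (List.map (fun f => f x) (List.drop (↑n + 1) l0).reverse).prod i j :=
      funext fun x => by rw [hlist x, ← List.map_drop, List.map_reverse]
    rw [heq]; exact this
  have : (fun x : Fin N → Fin d → Fin d → ℝ => auxG d N Dstar x n i j)
      = fun x => (N : ℝ)⁻¹ * ∑ k, (∑ l, (((List.ofFn fun k : Fin N => Matrix.of (x k)).take
          (n : ℕ)).reverse.prod) l i *
            (Dstar l k - ((List.ofFn fun k : Fin N => Matrix.of (x k)).reverse.prod) l k)) *
          (((List.ofFn fun k : Fin N => Matrix.of (x k)).drop ((n : ℕ) + 1)).reverse.prod) j k := by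
    funext x
    simp only [auxG, Matrix.smul_apply, smul_eq_mul, Matrix.mul_apply, Matrix.transpose_apply,
      Matrix.sub_apply]
  rw [this]
  refine ContDiff.mul contDiff_const ?_
  refine ContDiff.sum fun k _ => ContDiff.mul (ContDiff.sum fun l _ => ?_) ((hC j k))
  exact ContDiff.mul (hA l i) (contDiff_const.sub (hB l k))

theorem stmt_14 (d N : ℕ) (hN : 1 ≤ N) (σ0 : ℝ) (hσ0 : 0 < σ0)
    (W : Fin N → ℝ → Matrix (Fin d) (Fin d) ℝ)
    (Wstar U Dstar : Matrix (Fin d) (Fin d) ℝ)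
    (hU : U * Uᵀ = 1) (hdiag : Dstar.IsDiag)
    (hdecomp : Wstar = Uᵀ * Dstar * U) (hpsd : Wstar.PosSemidef)
    -- the end-to-end product W(t) = W_N(t) ⋯ W_1(t)
    (P : ℝ → Matrix (Fin d) (Fin d) ℝ)
    (hP : ∀ t, P t = (List.ofFn fun n : Fin N => W n t).reverse.prod)
    -- gradient flow: Ẇₙ = (1/N) · W_{1:n-1}ᵀ (W* - W) W_{n+1:N}ᵀ, entrywise
    (hflow : ∀ (n : Fin N) (t : ℝ) (i j : Fin d),
      HasDerivAt (fun s => W n s i j)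
        (((N : ℝ)⁻¹ •
          (((List.ofFn fun k : Fin N => W k t).take (n : ℕ)).reverse.prodᵀ *
            (Wstar - P t) *
            ((List.ofFn fun k : Fin N => W k t).drop ((n : ℕ) + 1)).reverse.prodᵀ)) i j) t)
    -- initialization: Wₙ(0) = σ₀^{1/N} · I
    (hinit : ∀ n : Fin N, W n 0 = σ0 ^ ((N : ℝ)⁻¹) • (1 : Matrix (Fin d) (Fin d) ℝ)) :
    (∀ (n : Fin N) (t : ℝ), (U * W n t * Uᵀ).IsDiag) ∧
      (∀ (i : Fin d) (t : ℝ),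
        HasDerivAt (fun s => (U * P s * Uᵀ) i i)
          ((U * P t * Uᵀ) i i ^ (2 - 2 / (N : ℝ)) *
            (Dstar i i - (U * P t * Uᵀ) i i)) t) := by
  classical
  have hNR : (N : ℝ) ≠ 0 := Nat.cast_ne_zero.mpr (by omega)
  have hU' : Uᵀ * U = 1 := mul_eq_one_comm.mp hU
  -- conjugation helpers
  have conj_mul : ∀ A B : Matrix (Fin d) (Fin d) ℝ,
      U * (A * B) * Uᵀ = (U * A * Uᵀ) * (U * B * Uᵀ) := by
    intro A B
    have h1 : U * A * Uᵀ * (U * B * Uᵀ) = U * (A * (Uᵀ * U * (B * Uᵀ))) := by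
      simp only [Matrix.mul_assoc]
    rw [h1, hU', Matrix.one_mul]
    simp only [Matrix.mul_assoc]
  have conj_prod : ∀ l : List (Matrix (Fin d) (Fin d) ℝ),
      U * l.prod * Uᵀ = (l.map (fun A => U * A * Uᵀ)).prod := by
    intro l
    induction l with
    | nil => simpa using hU
    | cons A l ih => simp only [List.prod_cons, List.map_cons]; rw [conj_mul, ih]
  have conj_T : ∀ A : Matrix (Fin d) (Fin d) ℝ, U * Aᵀ * Uᵀ = (U * A * Uᵀ)ᵀ := by
    intro A
    rw [Matrix.transpose_mul, Matrix.transpose_mul, Matrix.transpose_transpose]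
    simp only [Matrix.mul_assoc]
  have conj_unconj : ∀ A : Matrix (Fin d) (Fin d) ℝ, Uᵀ * (U * A * Uᵀ) * U = A := by
    intro A
    have h1 : Uᵀ * (U * A * Uᵀ) * U = (Uᵀ * U) * A * (Uᵀ * U) := by
      simp only [Matrix.mul_assoc]
    rw [h1, hU', Matrix.one_mul, Matrix.mul_one]
  have conj_Wstar : U * Wstar * Uᵀ = Dstar := by
    rw [hdecomp]
    have h1 : U * (Uᵀ * Dstar * U) * Uᵀ = (U * Uᵀ) * Dstar * (U * Uᵀ) := by
      simp only [Matrix.mul_assoc]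
    rw [h1, hU, Matrix.one_mul, Matrix.mul_one]
  set V : ℝ → Fin N → Fin d → Fin d → ℝ := fun s n i j => (U * W n s * Uᵀ) i j with hV
  have hofV : ∀ (t : ℝ) (k : Fin N), Matrix.of (V t k) = U * W k t * Uᵀ := fun _ _ => rfl
  have hlV : ∀ t : ℝ, (List.ofFn fun k : Fin N => Matrix.of (V t k))
      = (List.ofFn fun k : Fin N => W k t).map (fun A => U * A * Uᵀ) := by
    intro t; rw [List.map_ofFn]; rfl
  have entry_eq : ∀ (X : Matrix (Fin d) (Fin d) ℝ) (i j : Fin d),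
      (U * X * Uᵀ) i j = ∑ k, (∑ l, U i l * X l k) * U j k := by
    intro X i j; simp only [Matrix.mul_apply, Matrix.transpose_apply]
  have hconjflow : ∀ (n : Fin N) (t : ℝ),
      U * ((N : ℝ)⁻¹ • (((List.ofFn fun k : Fin N => W k t).take (n : ℕ)).reverse.prodᵀ *
          (Wstar - P t) *
          ((List.ofFn fun k : Fin N => W k t).drop ((n : ℕ) + 1)).reverse.prodᵀ)) * Uᵀ
        = Matrix.of (auxG d N Dstar (V t) n) := by
    intro n t
    rw [Matrix.mul_smul, Matrix.smul_mul]
    have hA : U * (((List.ofFn fun k : Fin N => W k t).take (n : ℕ)).reverse.prod)ᵀ * Uᵀ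
        = (((List.ofFn fun k : Fin N => Matrix.of (V t k)).take (n : ℕ)).reverse.prod)ᵀ := by
      rw [conj_T, conj_prod, List.map_reverse, List.map_take, ← hlV t]
    have hB : U * ((List.ofFn fun k : Fin N => W k t).reverse.prod) * Uᵀ
        = (List.ofFn fun k : Fin N => Matrix.of (V t k)).reverse.prod := by
      rw [conj_prod, List.map_reverse, ← hlV t]
    have hC : U * (((List.ofFn fun k : Fin N => W k t).drop ((n : ℕ) + 1)).reverse.prod)ᵀ * Uᵀ
        = (((List.ofFn fun k : Fin N => Matrix.of (V t k)).drop ((n : ℕ) + 1)).reverse.prod)ᵀ := by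
      rw [conj_T, conj_prod, List.map_reverse, List.map_drop, ← hlV t]
    have hmid : U * (Wstar - P t) * Uᵀ
        = Dstar - (List.ofFn fun k : Fin N => Matrix.of (V t k)).reverse.prod := by
      rw [Matrix.mul_sub, Matrix.sub_mul, conj_Wstar, hP t, hB]
    have hRHS : Matrix.of (auxG d N Dstar (V t) n) = (N : ℝ)⁻¹ •
        ((((List.ofFn fun k : Fin N => Matrix.of (V t k)).take (n : ℕ)).reverse.prod)ᵀ *
          (Dstar - (List.ofFn fun k : Fin N => Matrix.of (V t k)).reverse.prod) *
          (((List.ofFn fun k : Fin N => Matrix.of (V t k)).drop ((n : ℕ) + 1)).reverse.prod)ᵀ) :=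
      rfl
    rw [hRHS, conj_mul, conj_mul, hA, hmid, hC]
  have hVd : ∀ (n : Fin N) (i j : Fin d) (t : ℝ),
      HasDerivAt (fun s => V s n i j) (auxG d N Dstar (V t) n i j) t := by
    intro n i j t
    have h1 : (fun s => V s n i j) = fun s => ∑ k, (∑ l, U i l * W n s l k) * U j k := by
      funext s; exact entry_eq (W n s) i j
    rw [h1]
    have h2 := HasDerivAt.fun_sum (x := t) (u := Finset.univ)
      (fun k _ => HasDerivAt.mul_const
        (HasDerivAt.fun_sum (u := Finset.univ) (fun l _ => HasDerivAt.const_mul (U i l) (hflow n t l k)))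
        (U j k))
    convert h2 using 1
    · rfl
    · rfl
    rw [← entry_eq]
    rw [hconjflow n t]
    rfl
  have hdV : ∀ t : ℝ, HasDerivAt V (auxG d N Dstar (V t)) t := fun t =>
    hasDerivAt_pi.2 fun n => hasDerivAt_pi.2 fun i => hasDerivAt_pi.2 fun j => hVd n i j t
  have hdPiV : ∀ t : ℝ, HasDerivAt (fun s => auxPi d N (V s))
      (auxPi d N (auxG d N Dstar (V t))) t := by
    intro t
    refine hasDerivAt_pi.2 fun n => hasDerivAt_pi.2 fun i => hasDerivAt_pi.2 fun j => ?_
    by_cases h : i = j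
    · subst h
      have hder := HasDerivAt.div_const
        (HasDerivAt.fun_sum (u := Finset.univ) fun m _ => hVd m i i t) (N : ℝ)
      have heq : (fun s => auxPi d N (V s) n i i) = fun s => (∑ m, V s m i i) / (N:ℝ) := by
        funext s; simp [auxPi]
      rw [heq]
      convert hder using 1
      · rfl
      simp [auxPi]
    · have heq : (fun s => auxPi d N (V s) n i j) = fun _ => 0 := by
        funext s; simp [auxPi, h]
      rw [heq]
      have hval : auxPi d N (auxG d N Dstar (V t)) n i j = 0 := by simp [auxPi, h]
      rw [hval]
      exact hasDerivAt_const t 0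
  set y : ℝ → Fin N → Fin d → Fin d → ℝ := fun s => V s - auxPi d N (V s) with hy
  set y' : ℝ → Fin N → Fin d → Fin d → ℝ :=
    fun s => auxG d N Dstar (V s) - auxPi d N (auxG d N Dstar (V s)) with hy'
  have hdy : ∀ t : ℝ, HasDerivAt y (y' t) t := fun t => (hdV t).sub (hdPiV t)
  have hV0 : ∀ (n : Fin N) (i j : Fin d),
      V 0 n i j = if i = j then σ0 ^ ((N:ℝ)⁻¹) else 0 := by
    intro n i j
    show (U * W n 0 * Uᵀ) i j = _
    rw [hinit n, Matrix.mul_smul, Matrix.smul_mul, Matrix.mul_one, hU]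
    simp [Matrix.smul_apply, Matrix.one_apply, mul_ite]
  have hy0 : y 0 = 0 := by
    funext n i j
    show V 0 n i j - auxPi d N (V 0) n i j = 0
    by_cases h : i = j
    · subst h
      have hsum : auxPi d N (V 0) n i i = σ0 ^ ((N:ℝ)⁻¹) := by
        have hvv : ∀ m : Fin N, V 0 m i i = σ0 ^ ((N:ℝ)⁻¹) := fun m => by
          rw [hV0 m i i, if_pos rfl]
        simp only [auxPi]
        rw [if_pos trivial, Finset.sum_congr rfl fun m _ => hvv m, Finset.sum_const,
          Finset.card_univ, Fintype.card_fin, nsmul_eq_mul]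
        field_simp
      rw [hV0 n i i, if_pos rfl, hsum, sub_self]
    · rw [hV0 n i j, if_neg h]
      simp [auxPi, h]
  have hVc : Continuous V := continuous_iff_continuousAt.mpr fun t => (hdV t).continuousAt
  have hKbound : ∀ r : ℝ, 0 ≤ r →
      ∃ K, ∀ t ∈ Icc ((0:ℝ) - r) (0 + r), ‖y' t‖ ≤ K * ‖y t‖ := by
    intro r hr
    obtain ⟨R0, hR0⟩ := (isCompact_Icc (a := (0:ℝ) - r) (b := 0 + r)).exists_bound_of_continuousOn
      hVc.continuousOn
    set R := max R0 0 with hR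
    obtain ⟨L, hL⟩ := aux_exists_lip (auxG_contDiff d N Dstar) R
    refine ⟨2 * (L : ℝ), ?_⟩
    intro t ht
    have hVt : ‖V t‖ ≤ R := le_trans (hR0 t ht) (le_max_left _ _)
    have hPVt : ‖auxPi d N (V t)‖ ≤ R := le_trans (auxPi_norm_le d N hN (V t)) hVt
    have hm1 : V t ∈ Metric.closedBall (0 : Fin N → Fin d → Fin d → ℝ) R := by
      rwa [Metric.mem_closedBall, dist_zero_right]
    have hm2 : auxPi d N (V t) ∈ Metric.closedBall (0 : Fin N → Fin d → Fin d → ℝ) R := by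
      rwa [Metric.mem_closedBall, dist_zero_right]
    have hdist := hL.dist_le_mul _ hm1 _ hm2
    rw [dist_eq_norm, dist_eq_norm] at hdist
    have hinv := aux_invariance d N hN Dstar hdiag (auxPi d N (V t)) (auxPi_idem d N hN (V t))
    have hy'eq : y' t = (auxG d N Dstar (V t) - auxG d N Dstar (auxPi d N (V t)))
        - auxPi d N (auxG d N Dstar (V t) - auxG d N Dstar (auxPi d N (V t))) := by
      rw [auxPi_sub, hinv]
      show auxG d N Dstar (V t) - auxPi d N (auxG d N Dstar (V t)) = _
      abel
    have hyteq : y t = V t - auxPi d N (V t) := rfl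
    rw [hy'eq]
    calc ‖_ - auxPi d N _‖
        ≤ ‖auxG d N Dstar (V t) - auxG d N Dstar (auxPi d N (V t))‖
          + ‖auxPi d N (auxG d N Dstar (V t) - auxG d N Dstar (auxPi d N (V t)))‖ :=
          norm_sub_le _ _
      _ ≤ ‖auxG d N Dstar (V t) - auxG d N Dstar (auxPi d N (V t))‖
          + ‖auxG d N Dstar (V t) - auxG d N Dstar (auxPi d N (V t))‖ :=
          add_le_add le_rfl (auxPi_norm_le d N hN _)
      _ = 2 * ‖auxG d N Dstar (V t) - auxG d N Dstar (auxPi d N (V t))‖ := by ring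
      _ ≤ 2 * ((L : ℝ) * ‖V t - auxPi d N (V t)‖) := by
          have h2 : (0:ℝ) ≤ 2 := by norm_num
          exact mul_le_mul_of_nonneg_left hdist h2
      _ = 2 * (L : ℝ) * ‖y t‖ := by rw [hyteq]; ring
  have hzero : ∀ t : ℝ, y t = 0 := aux_ode_zero hdy hKbound hy0
  have hfix : ∀ t : ℝ, auxPi d N (V t) = V t := by
    intro t
    have h1 : V t - auxPi d N (V t) = 0 := hzero t
    exact (sub_eq_zero.mp h1).symm
  have part1 : ∀ (n : Fin N) (t : ℝ), (U * W n t * Uᵀ).IsDiag := by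
    intro n t i j hij
    have h1 := congrFun (congrFun (congrFun (hfix t) n) i) j
    have h0 : V t n i j = 0 := by
      rw [← h1]; simp [auxPi, hij]
    exact h0
  refine ⟨part1, ?_⟩
  -- part 2
  set n0 : Fin N := ⟨0, hN⟩ with hn0
  set δf : ℝ → Fin d → ℝ := fun t i => V t n0 i i with hδf
  have hdiagV : ∀ (t : ℝ) (k : Fin N), Matrix.of (V t k) = Matrix.diagonal (δf t) := by
    intro t k
    ext i j
    by_cases h : i = j
    · subst h
      rw [Matrix.of_apply, Matrix.diagonal_apply_eq]
      have h1 := congrFun (congrFun (congrFun (hfix t) k) i) i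
      have h2 := congrFun (congrFun (congrFun (hfix t) n0) i) i
      show V t k i i = V t n0 i i
      rw [← h1, ← h2]
      rfl
    · rw [Matrix.of_apply, Matrix.diagonal_apply_ne _ h]
      have h1 := congrFun (congrFun (congrFun (hfix t) k) i) j
      show V t k i j = 0
      rw [← h1]; simp [auxPi, h]
  have hW : ∀ (t : ℝ) (k : Fin N), W k t = Uᵀ * Matrix.diagonal (δf t) * U := by
    intro t k
    calc W k t = Uᵀ * (U * W k t * Uᵀ) * U := (conj_unconj (W k t)).symm
      _ = Uᵀ * Matrix.diagonal (δf t) * U := by rw [← hofV t k, hdiagV t k]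
  have hPconj : ∀ t : ℝ, U * P t * Uᵀ = Matrix.diagonal (δf t ^ N) := by
    intro t
    rw [hP t]
    have hl : (List.ofFn fun n : Fin N => W n t)
        = List.replicate N (Uᵀ * Matrix.diagonal (δf t) * U) := by
      rw [show (fun n : Fin N => W n t) = fun _ => Uᵀ * Matrix.diagonal (δf t) * U from
        funext (fun n => hW t n), List.ofFn_const]
    rw [hl, List.reverse_replicate, List.prod_replicate]
    have hpow : ∀ k : ℕ,
        U * (Uᵀ * Matrix.diagonal (δf t) * U) ^ k * Uᵀ = Matrix.diagonal (δf t) ^ k := by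
      intro k
      induction k with
      | zero => simpa using hU
      | succ k ih =>
        rw [pow_succ, conj_mul, ih, pow_succ]
        congr 1
        calc U * (Uᵀ * Matrix.diagonal (δf t) * U) * Uᵀ
            = (U * Uᵀ) * Matrix.diagonal (δf t) * (U * Uᵀ) := by simp only [Matrix.mul_assoc]
          _ = Matrix.diagonal (δf t) := by rw [hU, Matrix.one_mul, Matrix.mul_one]
    rw [hpow N, Matrix.diagonal_pow]
  intro i t
  have hval : ∀ s : ℝ, (U * P s * Uᵀ) i i = δf s i ^ N := by
    intro s; rw [hPconj s, Matrix.diagonal_apply_eq]; simp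
  have hfun : (fun s => (U * P s * Uᵀ) i i) = fun s => δf s i ^ N := funext hval
  have hδd : ∀ t : ℝ, HasDerivAt (fun s => δf s i)
      ((N:ℝ)⁻¹ * ((δf t i)^(N-1) * (Dstar i i - (δf t i)^N))) t := by
    intro t
    have h1 := hVd n0 i i t
    rwa [aux_keyComp d N Dstar hdiag (V t) (δf t) (fun k => hdiagV t k) n0 i i, if_pos rfl] at h1
  have hδ0 : ∀ j : Fin d, δf 0 j = σ0 ^ ((N:ℝ)⁻¹) := by
    intro j
    show V 0 n0 j j = _
    rw [hV0 n0 j j, if_pos rfl]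
  rw [hfun, hval t]
  have hD := (hδd t).pow N
  convert hD using 1
  · rfl
  · rfl
  · rfl
  -- final value identity
  rcases eq_or_lt_of_le hN with h1 | h2
  · -- N = 1
    have hN1 : N = 1 := h1.symm
    subst hN1
    norm_num [Real.rpow_zero]
  · -- 2 ≤ N
    have hN2 : 2 ≤ N := h2
    have hcont : Continuous fun s => δf s i :=
      continuous_iff_continuousAt.mpr fun t => (hδd t).continuousAt
    have hne : ∀ s : ℝ, δf s i ≠ 0 := by
      intro t0 h0
      set g : ℝ → ℝ := fun x => (N:ℝ)⁻¹ * (x^(N-1) * (Dstar i i - x^N)) with hg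
      set hf : ℝ → ℝ := fun x => (N:ℝ)⁻¹ * (x^(N-2) * (Dstar i i - x^N)) with hhf
      have hgh : ∀ x : ℝ, g x = hf x * x := by
        intro x
        have hx : x^(N-1) = x^(N-2) * x := by rw [← pow_succ]; congr 1; omega
        show (N:ℝ)⁻¹ * (x^(N-1) * (Dstar i i - x^N)) = (N:ℝ)⁻¹ * (x^(N-2) * (Dstar i i - x^N)) * x
        rw [hx]; ring
      have hKb : ∀ r : ℝ, 0 ≤ r → ∃ K, ∀ s ∈ Icc (t0 - r) (t0 + r),
          ‖g (δf s i)‖ ≤ K * ‖δf s i‖ := by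
        intro r hr
        have hch : Continuous fun s => hf (δf s i) := by
          have : Continuous hf := by
            show Continuous fun x : ℝ => (N:ℝ)⁻¹ * (x^(N-2) * (Dstar i i - x^N))
            exact continuous_const.mul ((continuous_pow _).mul
              (continuous_const.sub (continuous_pow _)))
          exact this.comp hcont
        obtain ⟨C, hC⟩ := (isCompact_Icc (a := t0 - r) (b := t0 + r)).exists_bound_of_continuousOn
          hch.continuousOn
        refine ⟨C, fun s hs => ?_⟩
        have hCs := hC s hs
        rw [Real.norm_eq_abs] at hCs ⊢
        rw [Real.norm_eq_abs, hgh, abs_mul]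
        exact mul_le_mul_of_nonneg_right hCs (abs_nonneg _)
      have hzero2 := aux_ode_zero (y := fun s => δf s i) (y' := fun s => g (δf s i))
        (a := t0) (fun s => hδd s) hKb h0
      have hc : δf 0 i = 0 := hzero2 0
      rw [hδ0 i] at hc
      exact absurd hc (ne_of_gt (Real.rpow_pos_of_pos hσ0 _))
    have h0pos : 0 < δf 0 i := by rw [hδ0 i]; exact Real.rpow_pos_of_pos hσ0 _
    have hpos : 0 < δf t i := by
      by_contra hle
      push_neg at hle
      have hlt : δf t i < 0 := lt_of_le_of_ne hle (hne t)
      have hmem : (0:ℝ) ∈ uIcc (δf t i) (δf 0 i) := by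
        rw [Set.mem_uIcc]; left; exact ⟨hlt.le, h0pos.le⟩
      obtain ⟨u, _, hu⟩ := intermediate_value_uIcc (hcont.continuousOn) hmem
      exact hne u hu
    have hrw : (δf t i ^ N : ℝ) ^ ((2:ℝ) - 2/(N:ℝ)) = δf t i ^ (2*N - 2) := by
      rw [← Real.rpow_natCast (δf t i) N, ← Real.rpow_mul hpos.le]
      have he : (N:ℝ) * (2 - 2/(N:ℝ)) = ((2*N - 2 : ℕ) : ℝ) := by
        rw [Nat.cast_sub (by omega : 2 ≤ 2*N)]
        push_cast
        field_simp
      rw [he, Real.rpow_natCast]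
    rw [hrw]
    have hexp : δf t i ^ (N-1) * δf t i ^ (N-1) = δf t i ^ (2*N-2) := by
      rw [← pow_add]; congr 1; omega
    field_simp
    rw [← hexp]
    ring
end

section
/- Suppose for each n ∈ {1,...,N} and each index i, the scalar functions σ_{n,i}(t) satisfy σ_{n,i}'(t) = (1/N)(σᵢ* - ∏ₖ σ_{k,i}(t))·∏_{j≠n} σ_{j,i}(t), with equal initialization σ_{n,i}(0) = σ₀^{1/N} > 0 for all n. Then σ_{n,i}(t) = σ_{m,i}(t) for all n, m, t, and the product σᵢ(t) = ∏ₙ σ_{n,i}(t) satisfies σᵢ'(t) = σᵢ(t)^{2-2/N}(σᵢ* - σᵢ(t)). -/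
open Set

/-- Grönwall: if `|f'| ≤ K|f|` on `[a,b]` and `f a = 0` then `f b = 0`. -/
private lemma gron_zero {f f' : ℝ → ℝ} (hf : ∀ t, HasDerivAt f (f' t) t) {a b : ℝ}
    (hab : a ≤ b) {K : ℝ} (hK : ∀ t ∈ Set.Icc a b, |f' t| ≤ K * |f t|) (h0 : f a = 0) :
    f b = 0 := by
  have H := norm_le_gronwallBound_of_norm_deriv_right_le (f := f) (f' := f')
    (δ := 0) (K := K) (ε := 0) (a := a) (b := b)
    (fun t _ => (hf t).continuousAt.continuousWithinAt)
    (fun x _ => (hf x).hasDerivWithinAt)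
    (by simp [h0])
    (fun x hx => by
      simpa [Real.norm_eq_abs] using hK x (Set.Ico_subset_Icc_self hx))
  have hb := H b (Set.right_mem_Icc.2 hab)
  rw [gronwallBound_ε0_δ0] at hb
  have : |f b| ≤ 0 := by simpa [Real.norm_eq_abs] using hb
  exact abs_nonpos_iff.mp this

/-- Backward version. -/
private lemma gron_zero' {f f' : ℝ → ℝ} (hf : ∀ t, HasDerivAt f (f' t) t) {a b : ℝ}
    (hab : a ≤ b) {K : ℝ} (hK : ∀ t ∈ Set.Icc a b, |f' t| ≤ K * |f t|) (h0 : f b = 0) :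
    f a = 0 := by
  have hg : ∀ s : ℝ, HasDerivAt (fun s => f (a + b - s)) (f' (a + b - s) * (-1)) s := by
    intro s
    exact (hf (a + b - s)).comp s (((hasDerivAt_id s).const_sub (a + b)))
  have key := gron_zero (f := fun s => f (a + b - s)) (f' := fun s => f' (a + b - s) * (-1))
    hg hab (K := K) (fun t ht => by
      have ht' : a + b - t ∈ Set.Icc a b := by
        constructor <;> [linarith [ht.2]; linarith [ht.1]]
      simpa [abs_mul] using hK _ ht') (by simpa using h0)
  simpa using key

/-- Sign preservation: a continuous never-vanishing function positive at 0 is positive. -/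
private lemma pos_of_ne_zero_aux {f : ℝ → ℝ} (hf : Continuous f) (h0 : 0 < f 0)
    (hne : ∀ t, f t ≠ 0) : ∀ t, 0 < f t := by
  intro t
  by_contra h
  push_neg at h
  have h' : f t < 0 := lt_of_le_of_ne h (hne t)
  have : (0 : ℝ) ∈ Set.uIcc (f t) (f 0) := by
    rw [Set.mem_uIcc]; left; exact ⟨le_of_lt h', le_of_lt h0⟩
  obtain ⟨s, _, hs⟩ := intermediate_value_uIcc (hf.continuousOn (s := Set.uIcc t 0)) this
  exact hne s hs

theorem stmt_15 {ι : Type*} (N : ℕ) (hN : 1 ≤ N) (σ0 : ℝ) (hσ0 : 0 < σ0)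
    (σ : ι → Fin N → ℝ → ℝ) (σstar : ι → ℝ)
    (hode : ∀ (i : ι) (n : Fin N) (t : ℝ),
      HasDerivAt (σ i n)
        ((1 / (N : ℝ)) * (σstar i - ∏ k : Fin N, σ i k t) *
          ∏ j ∈ Finset.univ.erase n, σ i j t) t)
    (hinit : ∀ (i : ι) (n : Fin N), σ i n 0 = σ0 ^ ((N : ℝ)⁻¹)) :
    (∀ (i : ι) (n m : Fin N) (t : ℝ), σ i n t = σ i m t) ∧
      (∀ (i : ι) (t : ℝ),
        HasDerivAt (fun s => ∏ n : Fin N, σ i n s)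
          ((∏ n : Fin N, σ i n t) ^ (2 - 2 / (N : ℝ)) *
            (σstar i - ∏ n : Fin N, σ i n t)) t) := by

  classical
  have hNR : (N : ℝ) ≠ 0 := by positivity
  have hpos0 : (0:ℝ) < σ0 ^ ((N:ℝ)⁻¹) := Real.rpow_pos_of_pos hσ0 _
  have hcont : ∀ i n, Continuous (σ i n) := by
    intro i n
    have : Differentiable ℝ (σ i n) := fun t => (hode i n t).differentiableAt
    exact this.continuous
  have hPcont : ∀ i, Continuous (fun t => ∏ k : Fin N, σ i k t) := fun i =>
    continuous_finset_prod _ (fun n _ => hcont i n)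
  have key : ∀ (i : ι) (n : Fin N) (t : ℝ),
      σ i n t * ∏ j ∈ Finset.univ.erase n, σ i j t = ∏ k : Fin N, σ i k t :=
    fun i n t => Finset.mul_prod_erase Finset.univ (fun k => σ i k t) (Finset.mem_univ n)
  have hsq : ∀ (i : ι) (n m : Fin N) (t : ℝ), σ i n t ^ 2 = σ i m t ^ 2 := by
    intro i n m t
    have hdiff : ∀ s : ℝ, HasDerivAt (fun r => σ i n r ^ 2 - σ i m r ^ 2) 0 s := by
      intro s
      have h1 := (hode i n s).pow 2
      have h2 := (hode i m s).pow 2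
      have h3 := h1.sub h2
      refine HasDerivAt.congr_deriv h3 (Eq.symm ?_)
      have k1 := key i n s
      have k2 := key i m s
      push_cast
      ring_nf
      ring_nf at k1 k2
      linear_combination (2 * (1/(N:ℝ)) * (σstar i - ∏ k : Fin N, σ i k s)) * (k2 - k1)
    have hconst := is_const_of_deriv_eq_zero
      (f := fun r => σ i n r ^ 2 - σ i m r ^ 2)
      (fun s => (hdiff s).differentiableAt)
      (fun s => (hdiff s).deriv)
    have h0 := hconst t 0
    simp only [hinit i n, hinit i m] at h0
    linarith [h0]
  have habs : ∀ (i : ι) (n m : Fin N) (t : ℝ), |σ i n t| = |σ i m t| :=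
    fun i n m t => (sq_eq_sq_iff_abs_eq_abs _ _).1 (hsq i n m t)
  set n0 : Fin N := ⟨0, hN⟩ with hn0
  have hQabs : ∀ (i : ι) (n : Fin N) (t : ℝ),
      |∏ j ∈ Finset.univ.erase n, σ i j t| = |σ i n0 t| ^ (N - 1) := by
    intro i n t
    rw [Finset.abs_prod]
    rw [Finset.prod_congr rfl (fun j _ => habs i j n0 t), Finset.prod_const,
      Finset.card_erase_of_mem (Finset.mem_univ n), Finset.card_univ, Fintype.card_fin]
  have main : ∀ i : ι, (∀ (n m : Fin N) (t : ℝ), σ i n t = σ i m t) ∧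
      (∀ t : ℝ, HasDerivAt (fun s => ∏ n : Fin N, σ i n s)
        ((∏ n : Fin N, σ i n t) ^ (2 - 2 / (N : ℝ)) *
          (σstar i - ∏ n : Fin N, σ i n t)) t) := by
    intro i
    rcases eq_or_lt_of_le hN with h1 | h2
    · -- N = 1
      subst h1
      constructor
      · intro n m t; rw [Subsingleton.elim n m]
      · intro t
        have h := hode i n0 t
        have hQ : Finset.univ.erase n0 = (∅ : Finset (Fin 1)) :=
          Finset.eq_empty_of_forall_notMem
            (fun j hj => (Finset.mem_erase.mp hj).1 (Subsingleton.elim j n0))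
        have hE : (2 : ℝ) - 2 / ((1:ℕ) : ℝ) = 0 := by norm_num
        have hv : ∀ s, ∏ n : Fin 1, σ i n s = σ i n0 s := by
          intro s
          rw [Fin.prod_univ_one]
          rfl
        simp only [hv, hE, Real.rpow_zero, one_mul]
        simp only [hQ, hv, Finset.prod_empty, mul_one, Nat.cast_one] at h
        simpa using h
    · -- 2 ≤ N
      have hN2 : 2 ≤ N := h2
      have hne : ∀ t, σ i n0 t ≠ 0 := by
        intro t0 ht0
        have hvD : ∀ s : ℝ, HasDerivAt (σ i n0)
            ((1/(N:ℝ)) * (σstar i - ∏ k : Fin N, σ i k s) *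
              ∏ j ∈ Finset.univ.erase n0, σ i j s) s := fun s => hode i n0 s
        have hbound : ∀ a b : ℝ, ∃ K, ∀ s ∈ Set.Icc a b,
            |(1/(N:ℝ)) * (σstar i - ∏ k : Fin N, σ i k s) *
              ∏ j ∈ Finset.univ.erase n0, σ i j s| ≤ K * |σ i n0 s| := by
          intro a b
          have hh : Continuous (fun s => (1/(N:ℝ)) * |σstar i - ∏ k : Fin N, σ i k s| *
              |σ i n0 s| ^ (N-2)) := by
            apply Continuous.mul
            · exact continuous_const.mul ((continuous_const.sub (hPcont i)).abs)
            · exact ((hcont i n0).abs).pow _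
          obtain ⟨K, hK⟩ := (isCompact_Icc (a := a) (b := b)).exists_bound_of_continuousOn
            hh.continuousOn
          refine ⟨K, fun s hs => ?_⟩
          have h1 : |(1/(N:ℝ)) * (σstar i - ∏ k : Fin N, σ i k s) *
              ∏ j ∈ Finset.univ.erase n0, σ i j s|
              = ((1/(N:ℝ)) * |σstar i - ∏ k : Fin N, σ i k s| * |σ i n0 s| ^ (N-2)) * |σ i n0 s| := by
            rw [abs_mul, abs_mul, hQabs i n0 s]
            have hexp : N - 1 = (N - 2) + 1 := by omega
            rw [hexp, pow_succ]
            have h1N : |(1:ℝ)/(N:ℝ)| = 1/(N:ℝ) := abs_of_pos (by positivity)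
            rw [h1N]; ring
          rw [h1]
          have hK' := hK s hs
          rw [Real.norm_eq_abs] at hK'
          have hnn : (0:ℝ) ≤ (1/(N:ℝ)) * |σstar i - ∏ k : Fin N, σ i k s| *
              |σ i n0 s| ^ (N-2) := by positivity
          exact mul_le_mul_of_nonneg_right ((le_abs_self _).trans hK') (abs_nonneg _)
        have hzero : σ i n0 0 = 0 := by
          rcases le_total t0 0 with h | h
          · obtain ⟨K, hK⟩ := hbound t0 0
            exact gron_zero hvD h hK ht0
          · obtain ⟨K, hK⟩ := hbound 0 t0
            exact gron_zero' hvD h hK ht0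
        rw [hinit i n0] at hzero
        exact absurd hzero (ne_of_gt hpos0)
      have hposv : ∀ t, 0 < σ i n0 t :=
        pos_of_ne_zero_aux (hcont i n0) (by rw [hinit]; exact hpos0) hne
      have hposn : ∀ (n : Fin N) (t : ℝ), 0 < σ i n t := by
        intro n
        refine pos_of_ne_zero_aux (hcont i n) (by rw [hinit]; exact hpos0) (fun t h => ?_)
        have := habs i n n0 t
        rw [h, abs_zero] at this
        exact hne t (abs_eq_zero.mp this.symm)
      have heq : ∀ (n m : Fin N) (t : ℝ), σ i n t = σ i m t := by
        intro n m t
        have h := habs i n m t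
        rwa [abs_of_pos (hposn n t), abs_of_pos (hposn m t)] at h
      refine ⟨heq, fun t => ?_⟩
      have hprod := HasDerivAt.finset_prod (u := (Finset.univ : Finset (Fin N)))
        (f := fun n s => σ i n s)
        (f' := fun n => (1/(N:ℝ)) * (σstar i - ∏ k : Fin N, σ i k t) *
          ∏ j ∈ Finset.univ.erase n, σ i j t)
        (x := t) (fun n _ => hode i n t)
      have hQ : ∀ n : Fin N, ∏ j ∈ Finset.univ.erase n, σ i j t = σ i n0 t ^ (N-1) := by
        intro n
        rw [Finset.prod_congr rfl (fun j _ => heq j n0 t), Finset.prod_const,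
          Finset.card_erase_of_mem (Finset.mem_univ n), Finset.card_univ, Fintype.card_fin]
      have hP : ∏ k : Fin N, σ i k t = σ i n0 t ^ N := by
        rw [Finset.prod_congr rfl (fun j _ => heq j n0 t), Finset.prod_const,
          Finset.card_univ, Fintype.card_fin]
      set w := σ i n0 t with hw
      have hwpos : 0 < w := hposv t
      refine HasDerivAt.congr_deriv (f := fun s => ∏ n : Fin N, σ i n s)
        (by rw [← Finset.prod_fn]; exact hprod) (Eq.symm ?_)
      simp only [smul_eq_mul, hQ, hP]
      rw [Finset.sum_const, Finset.card_univ, Fintype.card_fin, nsmul_eq_mul]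
      have hrpow : (w^N : ℝ) ^ ((2:ℝ) - 2/(N:ℝ)) = w ^ (2*N-2) := by
        rw [← Real.rpow_natCast w N, ← Real.rpow_mul hwpos.le]
        have hc : (N:ℝ) * (2 - 2/(N:ℝ)) = ((2*N-2 : ℕ) : ℝ) := by
          push_cast [Nat.cast_sub (by omega : 2 ≤ 2*N)]
          field_simp
        rw [hc, Real.rpow_natCast]
      rw [hrpow]
      have hww : w^(N-1) * w^(N-1) = w^(2*N-2) := by
        rw [← pow_add]; congr 1; omega
      have hww2 : w ^ ((N-1)*2) = w ^ (2*N-2) := by congr 1; omega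
      field_simp
      linear_combination (w^N - σstar i) * hww2
  exact ⟨fun i => (main i).1, fun i => (main i).2⟩
end

section
/- Let W(t) be a d×d matrix evolving by Ẇ = (1/2)·W(W*ᵀW* - WᵀW), with W(0)ᵀW(0) = σ₀·I for σ₀ > 0. Then WᵀW satisfies d/dt(WᵀW) = (1/2)[(WᵀW)(W*ᵀW* - WᵀW) + (W*ᵀW* - WᵀW)(WᵀW)], WᵀW and W*ᵀW* remain simultaneously diagonalizable for all t, and each eigenvalue σᵢ of WᵀW satisfies σᵢ' = σᵢ(σᵢ* - σᵢ), where σᵢ* are the eigenvalues of W*ᵀW*. -/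
open Matrix Set

private lemma abs_entry_le_sum {d : ℕ} (A : Matrix (Fin d) (Fin d) ℝ) (i j : Fin d) :
    |A i j| ≤ ∑ i', ∑ j', |A i' j'| := by
  calc |A i j| ≤ ∑ j', |A i j'| :=
        Finset.single_le_sum (f := fun j' => |A i j'|) (fun k _ => abs_nonneg _) (Finset.mem_univ j)
    _ ≤ ∑ i', ∑ j', |A i' j'| :=
        Finset.single_le_sum (f := fun i' => ∑ j', |A i' j'|)
          (fun k _ => Finset.sum_nonneg fun _ _ => abs_nonneg _) (Finset.mem_univ i)

private lemma mul_entry_bound {d : ℕ} (A B : Matrix (Fin d) (Fin d) ℝ) (C1 C2 : ℝ)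
    (hA : ∀ i j, |A i j| ≤ C1) (hB : ∀ i j, |B i j| ≤ C2) (h1 : 0 ≤ C1)
    (i j : Fin d) : |(A * B) i j| ≤ d * (C1 * C2) := by
  rw [Matrix.mul_apply]
  calc |∑ k, A i k * B k j| ≤ ∑ k, |A i k * B k j| := Finset.abs_sum_le_sum_abs _ _
    _ ≤ ∑ _k : Fin d, C1 * C2 := Finset.sum_le_sum fun k _ => by
        rw [abs_mul]; exact mul_le_mul (hA i k) (hB k j) (abs_nonneg _) h1
    _ = d * (C1 * C2) := by
        simp [Finset.sum_const, Finset.card_univ, nsmul_eq_mul]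

private lemma offdiag_zero {d : ℕ} (D : Matrix (Fin d) (Fin d) ℝ)
    (M : ℝ → Matrix (Fin d) (Fin d) ℝ)
    (hM' : ∀ (t : ℝ) (i j : Fin d), HasDerivAt (fun s => M s i j)
      (((1/2 : ℝ) • (M t * (D - M t) + (D - M t) * M t)) i j) t)
    (hM0 : ∀ i j, i ≠ j → M 0 i j = 0)
    (hDd : D.IsDiag) :
    ∀ (t : ℝ) (i j : Fin d), i ≠ j → M t i j = 0 := by
  set f₀ : Matrix (Fin d) (Fin d) ℝ → Matrix (Fin d) (Fin d) ℝ :=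
    fun X => (1/2 : ℝ) • (X * (D - X) + (D - X) * X) with hf₀def
  have hf₀ : ∀ X, f₀ X = (1/2 : ℝ) • (X * D + D * X) - X * X := by
    intro X
    simp only [hf₀def]
    have : X * (D - X) + (D - X) * X = (X * D + D * X) - (X * X + X * X) := by
      noncomm_ring
    rw [this, smul_sub]
    congr 1
    rw [smul_add, ← add_smul]
    norm_num
  have hDiff : ∀ PA PB : Matrix (Fin d) (Fin d) ℝ, f₀ PA - f₀ PB =
      ((1/2 : ℝ) • ((PA - PB) * D + D * (PA - PB)) - (PA * (PA - PB) + (PA - PB) * PB)) := by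
    intro PA PB
    rw [hf₀ PA, hf₀ PB]
    have h1 : PA * (PA - PB) + (PA - PB) * PB = PA * PA - PB * PB := by noncomm_ring
    rw [h1, Matrix.sub_mul, Matrix.mul_sub]
    module
  set q : ℝ → (Fin d → Fin d → ℝ) :=
    fun t i j => if i = j then 0 else M t i j with hqdef
  set pm : ℝ → Matrix (Fin d) (Fin d) ℝ :=
    fun t => Matrix.diagonal (fun i => M t i i) with hpmdef
  have hpmq : ∀ t, pm t + Matrix.of (q t) = M t := by
    intro t
    ext i j
    by_cases h : i = j <;>
      simp [hpmdef, hqdef, Matrix.diagonal_apply, h]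
  set v : ℝ → (Fin d → Fin d → ℝ) → (Fin d → Fin d → ℝ) :=
    fun t X i j => if i = j then 0 else (f₀ (pm t + Matrix.of X)) i j with hvdef
  have hDdiag : D = Matrix.diagonal D.diag := hDd.diagonal_diag.symm
  have hv0 : ∀ t, v t (0 : Fin d → Fin d → ℝ) = 0 := by
    intro t
    funext i j
    simp only [hvdef]
    by_cases h : i = j
    · simp [h]
    · have hof : Matrix.of (0 : Fin d → Fin d → ℝ) = (0 : Matrix (Fin d) (Fin d) ℝ) := rfl
      simp only [h, if_false, hof, add_zero, Pi.zero_apply]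
      simp only [hf₀def, hpmdef]
      rw [hDdiag]
      simp [Matrix.diagonal_sub, Matrix.diagonal_mul_diagonal, Matrix.diagonal_apply_ne _ h]
  have hq0 : q 0 = 0 := by
    funext i j
    simp only [hqdef]
    by_cases h : i = j
    · simp [h]
    · simp [h, hM0 i j h]
  have hqderiv : ∀ t, HasDerivAt q (v t (q t)) t := by
    intro t
    rw [hasDerivAt_pi]
    intro i
    rw [hasDerivAt_pi]
    intro j
    by_cases h : i = j
    · have h1 : (fun s => q s i j) = fun _ => (0 : ℝ) := by
        funext s; simp [hqdef, h]
      have h2 : v t (q t) i j = 0 := by simp [hvdef, h]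
      rw [show (fun s => q s i j) = fun _ => (0:ℝ) from h1, h2]
      exact hasDerivAt_const t 0
    · have h1 : (fun s => q s i j) = fun s => M s i j := by
        funext s; simp [hqdef, h]
      have h2 : v t (q t) i j = ((1/2 : ℝ) • (M t * (D - M t) + (D - M t) * M t)) i j := by
        simp only [hvdef, h, if_false, hpmq t, hf₀def]
      rw [show (fun s => q s i j) = fun s => M s i j from h1, h2]
      exact hM' t i j
  have hqc : Continuous q := by
    apply continuous_pi; intro i; apply continuous_pi; intro j
    by_cases h : i = j
    · have h1 : (fun s => q s i j) = fun _ => (0 : ℝ) := by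
        funext s; simp [hqdef, h]
      rw [h1]; exact continuous_const
    · have h1 : (fun s => q s i j) = fun s => M s i j := by
        funext s; simp [hqdef, h]
      rw [h1]
      exact continuous_iff_continuousAt.2 fun s => (hM' s i j).continuousAt
  have key : ∀ T : ℝ, 0 < T → ∀ t ∈ Icc (-T) T, q t = 0 := by
    intro T hT
    set CD : ℝ := ∑ i, ∑ j, |D i j| with hCDdef
    have hCD0 : 0 ≤ CD := Finset.sum_nonneg fun _ _ => Finset.sum_nonneg fun _ _ => abs_nonneg _
    have hCDe : ∀ i j, |D i j| ≤ CD := fun i j => abs_entry_le_sum D i j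
    have hcont : ContinuousOn (fun t => ∑ i, ∑ j, |M t i j|) (Icc (-T) T) := by
      apply Continuous.continuousOn
      apply continuous_finset_sum; intro i _
      apply continuous_finset_sum; intro j _
      exact (continuous_iff_continuousAt.2 fun s => (hM' s i j).continuousAt).abs
    obtain ⟨CM, hCM⟩ := isCompact_Icc.exists_bound_of_continuousOn hcont
    have h0mem : (0 : ℝ) ∈ Icc (-T) T := ⟨by linarith, by linarith⟩
    have hsum_nonneg : ∀ t, (0:ℝ) ≤ ∑ i, ∑ j, |M t i j| :=
      fun t => Finset.sum_nonneg fun _ _ => Finset.sum_nonneg fun _ _ => abs_nonneg _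
    have hCM0 : 0 ≤ CM := le_trans (hsum_nonneg 0) (by
      have := hCM 0 h0mem
      rwa [Real.norm_eq_abs, abs_of_nonneg (hsum_nonneg 0)] at this)
    have hMe : ∀ t ∈ Icc (-T) T, ∀ i j, |M t i j| ≤ CM := by
      intro t ht i j
      calc |M t i j| ≤ ∑ i', ∑ j', |M t i' j'| := abs_entry_le_sum (M t) i j
        _ ≤ CM := by
            have := hCM t ht
            rwa [Real.norm_eq_abs, abs_of_nonneg (hsum_nonneg t)] at this
    set L : ℝ := d * (CD + 4 * CM) with hLdef
    have hL0 : 0 ≤ L := by positivity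
    set τ : ℝ → ℝ := fun t => max (-T) (min T t) with hτdef
    have hτmem : ∀ t, τ t ∈ Icc (-T) T := by
      intro t
      exact ⟨le_max_left _ _, max_le (by linarith) (min_le_left _ _)⟩
    have hτid : ∀ t ∈ Icc (-T) T, τ t = t := by
      intro t ht
      simp only [hτdef]
      rw [min_eq_right ht.2, max_eq_right ht.1]
    set vT : ℝ → (Fin d → Fin d → ℝ) → (Fin d → Fin d → ℝ) := fun t => v (τ t) with hvTdef
    set K : NNReal := Real.toNNReal L with hKdef
    have hKL : (K : ℝ) = L := Real.coe_toNNReal L hL0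
    have hlip : ∀ t, LipschitzOnWith K (vT t)
        (Metric.closedBall (0 : Fin d → Fin d → ℝ) CM) := by
      intro t
      rw [lipschitzOnWith_iff_dist_le_mul]
      intro X hX Y hY
      rw [Metric.mem_closedBall, dist_zero_right] at hX hY
      set PA : Matrix (Fin d) (Fin d) ℝ := pm (τ t) + Matrix.of X with hPAdef
      set PB : Matrix (Fin d) (Fin d) ℝ := pm (τ t) + Matrix.of Y with hPBdef
      have hδ0 : 0 ≤ dist X Y := dist_nonneg
      have hZe : ∀ i j, |(PA - PB) i j| ≤ dist X Y := by
        intro i j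
        have h3 : (PA - PB) i j = X i j - Y i j := by
          simp only [hPAdef, hPBdef, Matrix.sub_apply, Matrix.add_apply, Matrix.of_apply]
          ring
        rw [h3]
        calc |X i j - Y i j| = ‖(X - Y) i j‖ := by simp [Real.norm_eq_abs]
          _ ≤ ‖(X - Y) i‖ := norm_le_pi_norm ((X - Y) i) j
          _ ≤ ‖X - Y‖ := norm_le_pi_norm (X - Y) i
          _ = dist X Y := (dist_eq_norm X Y).symm
      have hpme : ∀ i j, |pm (τ t) i j| ≤ CM := by
        intro i j
        simp only [hpmdef]
        by_cases h : i = j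
        · subst h
          simp only [Matrix.diagonal_apply_eq]
          exact hMe (τ t) (hτmem t) i i
        · rw [Matrix.diagonal_apply_ne _ h]
          simpa using hCM0
      have hXe : ∀ (X' : Fin d → Fin d → ℝ), ‖X'‖ ≤ CM → ∀ i j, |Matrix.of X' i j| ≤ CM := by
        intro X' hX' i j
        calc |Matrix.of X' i j| = ‖X' i j‖ := rfl
          _ ≤ ‖X' i‖ := norm_le_pi_norm (X' i) j
          _ ≤ ‖X'‖ := norm_le_pi_norm X' i
          _ ≤ CM := hX'
      have hPAe : ∀ i j, |PA i j| ≤ 2 * CM := by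
        intro i j
        calc |PA i j| ≤ |pm (τ t) i j| + |Matrix.of X i j| := by
              rw [hPAdef]; exact abs_add_le _ _
          _ ≤ CM + CM := add_le_add (hpme i j) (hXe X hX i j)
          _ = 2 * CM := by ring
      have hPBe : ∀ i j, |PB i j| ≤ 2 * CM := by
        intro i j
        calc |PB i j| ≤ |pm (τ t) i j| + |Matrix.of Y i j| := by
              rw [hPBdef]; exact abs_add_le _ _
          _ ≤ CM + CM := add_le_add (hpme i j) (hXe Y hY i j)
          _ = 2 * CM := by ring
      rw [dist_eq_norm]
      have hrhs0 : 0 ≤ (K : ℝ) * dist X Y := mul_nonneg (by rw [hKL]; exact hL0) hδ0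
      rw [pi_norm_le_iff_of_nonneg hrhs0]
      intro i
      rw [pi_norm_le_iff_of_nonneg hrhs0]
      intro j
      have hentry : (vT t X - vT t Y) i j = vT t X i j - vT t Y i j := rfl
      rw [Real.norm_eq_abs, hentry]
      by_cases h : i = j
      · have e1 : vT t X i j = 0 := by simp [hvTdef, hvdef, h]
        have e2 : vT t Y i j = 0 := by simp [hvTdef, hvdef, h]
        rw [e1, e2, sub_zero, abs_zero]
        exact hrhs0
      · have e1 : vT t X i j = f₀ PA i j := by
          simp only [hvTdef, hvdef, h, if_false, hPAdef]
        have e2 : vT t Y i j = f₀ PB i j := by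
          simp only [hvTdef, hvdef, h, if_false, hPBdef]
        rw [e1, e2]
        have e3 : f₀ PA i j - f₀ PB i j = (f₀ PA - f₀ PB) i j := rfl
        rw [e3, hDiff PA PB]
        have e4 : ((1/2 : ℝ) • ((PA - PB) * D + D * (PA - PB))
              - (PA * (PA - PB) + (PA - PB) * PB)) i j
            = (1/2) * (((PA - PB) * D) i j + (D * (PA - PB)) i j)
              - ((PA * (PA - PB)) i j + ((PA - PB) * PB) i j) := by
          simp only [Matrix.sub_apply, Matrix.add_apply, Matrix.smul_apply, smul_eq_mul]
        rw [e4]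
        have b1 := mul_entry_bound (PA - PB) D (dist X Y) CD hZe hCDe hδ0 i j
        have b2 := mul_entry_bound D (PA - PB) CD (dist X Y) hCDe hZe hCD0 i j
        have b3 := mul_entry_bound PA (PA - PB) (2*CM) (dist X Y) hPAe hZe (by linarith) i j
        have b4 := mul_entry_bound (PA - PB) PB (dist X Y) (2*CM) hZe hPBe hδ0 i j
        have c1 := abs_le.mp b1
        have c2 := abs_le.mp b2
        have c3 := abs_le.mp b3
        have c4 := abs_le.mp b4
        have goalK : (K : ℝ) * dist X Y = d * (CD + 4 * CM) * dist X Y := by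
          rw [hKL, hLdef]
        have hring : (1/2) * ((d : ℝ) * (dist X Y * CD)) + (1/2) * ((d:ℝ) * (CD * dist X Y))
            + (d:ℝ) * (2 * CM * dist X Y) + (d:ℝ) * (dist X Y * (2 * CM))
            = (d:ℝ) * (CD + 4 * CM) * dist X Y := by ring
        rw [goalK, abs_le]
        constructor
        · linarith [c1.1, c2.1, c3.1, c4.1, hring]
        · linarith [c1.2, c2.2, c3.2, c4.2, hring]
    -- apply uniqueness
    have heqon : Set.EqOn q (fun _ => (0 : Fin d → Fin d → ℝ)) (Icc (-T) T) := by
      apply ODE_solution_unique_of_mem_Icc (v := vT)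
        (s := fun _ => Metric.closedBall (0 : Fin d → Fin d → ℝ) CM) (K := K)
        (fun t _ => hlip t) (show (0:ℝ) ∈ Ioo (-T) T from ⟨by linarith, hT⟩)
        (hqc.continuousOn)
      · intro t ht
        have : vT t (q t) = v t (q t) := by
          simp only [hvTdef]
          rw [hτid t (Ioo_subset_Icc_self ht)]
        rw [this]
        exact hqderiv t
      · intro t ht
        rw [Metric.mem_closedBall, dist_zero_right]
        rw [pi_norm_le_iff_of_nonneg hCM0]
        intro i
        rw [pi_norm_le_iff_of_nonneg hCM0]
        intro j
        rw [Real.norm_eq_abs]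
        by_cases h : i = j
        · simp [hqdef, h, hCM0]
        · have : q t i j = M t i j := by simp [hqdef, h]
          rw [this]
          exact hMe t (Ioo_subset_Icc_self ht) i j
      · exact continuousOn_const
      · intro t ht
        have : vT t ((fun _ => (0 : Fin d → Fin d → ℝ)) t) = 0 := by
          simp only [hvTdef]
          exact hv0 (τ t)
        rw [this]
        exact hasDerivAt_const t 0
      · intro t ht
        exact Metric.mem_closedBall_self hCM0
      · exact hq0
    intro t ht
    exact heqon ht
  intro t i j hij
  have hT : (0:ℝ) < |t| + 1 := by positivity
  have htmem : t ∈ Icc (-(|t|+1)) (|t|+1) := by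
    constructor
    · have := neg_abs_le t; linarith
    · have := le_abs_self t; linarith
  have hq := key (|t|+1) hT t htmem
  have h2 : M t i j = q t i j := by simp [hqdef, hij]
  rw [h2, hq]
  rfl

open Matrix

theorem stmt_16 (d : ℕ) (σ0 : ℝ) (hσ0 : 0 < σ0)
    (W : ℝ → Matrix (Fin d) (Fin d) ℝ) (Wstar : Matrix (Fin d) (Fin d) ℝ)
    (hflow : ∀ (t : ℝ) (i j : Fin d),
      HasDerivAt (fun s => W s i j)
        (((1 / 2 : ℝ) • (W t * (Wstarᵀ * Wstar - (W t)ᵀ * W t))) i j) t)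
    (hinit : (W 0)ᵀ * W 0 = σ0 • (1 : Matrix (Fin d) (Fin d) ℝ)) :
    (∀ (t : ℝ) (i j : Fin d),
      HasDerivAt (fun s => ((W s)ᵀ * W s) i j)
        (((1 / 2 : ℝ) •
          (((W t)ᵀ * W t) * (Wstarᵀ * Wstar - (W t)ᵀ * W t) +
            (Wstarᵀ * Wstar - (W t)ᵀ * W t) * ((W t)ᵀ * W t))) i j) t) ∧
    ∃ U : Matrix (Fin d) (Fin d) ℝ, U * Uᵀ = 1 ∧
      (U * (Wstarᵀ * Wstar) * Uᵀ).IsDiag ∧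
      (∀ t : ℝ, (U * ((W t)ᵀ * W t) * Uᵀ).IsDiag) ∧
      (∀ (i : Fin d) (t : ℝ),
        HasDerivAt (fun s => (U * ((W s)ᵀ * W s) * Uᵀ) i i)
          ((U * ((W t)ᵀ * W t) * Uᵀ) i i *
            ((U * (Wstarᵀ * Wstar) * Uᵀ) i i - (U * ((W t)ᵀ * W t) * Uᵀ) i i)) t) := by
  -- Part 1: the derivative of Gram matrix G = WᵀW
  have hG : ∀ (t : ℝ) (i j : Fin d),
      HasDerivAt (fun s => ((W s)ᵀ * W s) i j)
        (((1 / 2 : ℝ) •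
          (((W t)ᵀ * W t) * (Wstarᵀ * Wstar - (W t)ᵀ * W t) +
            (Wstarᵀ * Wstar - (W t)ᵀ * W t) * ((W t)ᵀ * W t))) i j) t := by
    intro t i j
    set S : Matrix (Fin d) (Fin d) ℝ := Wstarᵀ * Wstar - (W t)ᵀ * W t with hSdef
    set X : Matrix (Fin d) (Fin d) ℝ := (1/2 : ℝ) • (W t * S) with hXdef
    have hS_symm : Sᵀ = S := by
      rw [hSdef]
      simp [Matrix.transpose_sub, Matrix.transpose_mul]
    have key : ∀ k : Fin d, HasDerivAt (fun s => W s k i * W s k j)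
        (X k i * W t k j + W t k i * X k j) t := fun k => (hflow t k i).mul (hflow t k j)
    have hsum := HasDerivAt.fun_sum (A := fun k s => W s k i * W s k j)
      (A' := fun k => X k i * W t k j + W t k i * X k j) (u := Finset.univ)
      (fun k _ => key k)
    have hfun : (fun s => ((W s)ᵀ * W s) i j) = fun s => ∑ k, W s k i * W s k j := by
      funext s; simp [Matrix.mul_apply, Matrix.transpose_apply]
    rw [hfun]
    have hmat : Xᵀ * W t + (W t)ᵀ * X
        = (1/2 : ℝ) • (((W t)ᵀ * W t) * S + S * ((W t)ᵀ * W t)) := by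
      rw [hXdef, Matrix.transpose_smul, Matrix.transpose_mul, hS_symm,
        Matrix.smul_mul, Matrix.mul_smul, ← smul_add, add_comm]
      simp [Matrix.mul_assoc]
    have hval : (((1/2 : ℝ) • (((W t)ᵀ * W t) * S + S * ((W t)ᵀ * W t))) i j)
        = ∑ k, (X k i * W t k j + W t k i * X k j) := by
      rw [← hmat]
      simp [Matrix.add_apply, Matrix.mul_apply, Matrix.transpose_apply, Finset.sum_add_distrib]
    rw [hval]
    exact hsum
  refine ⟨hG, ?_⟩
  -- spectral decomposition of Wstarᵀ * Wstar
  have hA : (Wstarᵀ * Wstar).IsHermitian := by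
    have := Matrix.isHermitian_conjTranspose_mul_self Wstar
    rwa [Matrix.conjTranspose_eq_transpose_of_trivial] at this
  set V : Matrix (Fin d) (Fin d) ℝ := (hA.eigenvectorUnitary : Matrix (Fin d) (Fin d) ℝ) with hV
  have hstar : star V = Vᵀ := by
    rw [Matrix.star_eq_conjTranspose, Matrix.conjTranspose_eq_transpose_of_trivial]
  have hVl : Vᵀ * V = 1 := by
    rw [← hstar]; exact Matrix.mem_unitaryGroup_iff'.mp hA.eigenvectorUnitary.2
  have hVr : V * Vᵀ = 1 := by
    rw [← hstar]; exact Matrix.mem_unitaryGroup_iff.mp hA.eigenvectorUnitary.2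
  set U : Matrix (Fin d) (Fin d) ℝ := Vᵀ with hU
  have hUUT : U * Uᵀ = 1 := by rw [hU, Matrix.transpose_transpose]; exact hVl
  have hUTU : Uᵀ * U = 1 := by rw [hU, Matrix.transpose_transpose]; exact hVr
  have hD : U * (Wstarᵀ * Wstar) * Uᵀ = Matrix.diagonal hA.eigenvalues := by
    conv_lhs => rw [hA.spectral_theorem]
    simp only [Unitary.conjStarAlgAut_apply, Unitary.coe_star]
    rw [← hV]
    rw [hstar, hU, Matrix.transpose_transpose]
    have : (RCLike.ofReal ∘ hA.eigenvalues : Fin d → ℝ) = hA.eigenvalues := by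
      funext i; simp
    rw [this]
    calc Vᵀ * (V * diagonal hA.eigenvalues * Vᵀ) * V
        = (Vᵀ * V) * diagonal hA.eigenvalues * (Vᵀ * V) := by
          simp only [Matrix.mul_assoc]
      _ = Matrix.diagonal hA.eigenvalues := by rw [hVl, Matrix.one_mul, Matrix.mul_one]
  have hDd : (U * (Wstarᵀ * Wstar) * Uᵀ).IsDiag := by
    rw [hD]; exact Matrix.isDiag_diagonal _
  -- the conjugated Gram matrix M and its derivative
  set DD : Matrix (Fin d) (Fin d) ℝ := U * (Wstarᵀ * Wstar) * Uᵀ with hDDdef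
  set M : ℝ → Matrix (Fin d) (Fin d) ℝ := fun t => U * ((W t)ᵀ * W t) * Uᵀ with hMdef
  have hmul2 : ∀ X Y : Matrix (Fin d) (Fin d) ℝ,
      U * (X * Y) * Uᵀ = (U * X * Uᵀ) * (U * Y * Uᵀ) := by
    intro X Y
    calc U * (X * Y) * Uᵀ = U * (X * ((Uᵀ * U) * (Y * Uᵀ))) := by
          rw [hUTU, Matrix.one_mul]; simp only [Matrix.mul_assoc]
      _ = (U * X * Uᵀ) * (U * Y * Uᵀ) := by simp only [Matrix.mul_assoc]
  have hM' : ∀ (t : ℝ) (i j : Fin d), HasDerivAt (fun s => M s i j)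
      (((1/2 : ℝ) • (M t * (DD - M t) + (DD - M t) * M t)) i j) t := by
    intro t i j
    set G' : Matrix (Fin d) (Fin d) ℝ := (1 / 2 : ℝ) •
      (((W t)ᵀ * W t) * (Wstarᵀ * Wstar - (W t)ᵀ * W t) +
        (Wstarᵀ * Wstar - (W t)ᵀ * W t) * ((W t)ᵀ * W t)) with hG'def
    have step1 : HasDerivAt (fun s => M s i j) ((U * G' * Uᵀ) i j) t := by
      have hfun : ∀ s, M s i j = ∑ b, ∑ a, U i a * ((W s)ᵀ * W s) a b * U j b := by
        intro s
        simp [hMdef, Matrix.mul_apply, Finset.sum_mul, Matrix.transpose_apply]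
      have hfun' : (U * G' * Uᵀ) i j = ∑ b, ∑ a, U i a * G' a b * U j b := by
        simp [Matrix.mul_apply, Finset.sum_mul, Matrix.transpose_apply]
      simp only [hfun, hfun']
      apply HasDerivAt.fun_sum
      intro b _
      apply HasDerivAt.fun_sum
      intro a _
      exact (((hG t a b).const_mul (U i a)).mul_const (U j b))
    have step2 : U * G' * Uᵀ = (1/2 : ℝ) • (M t * (DD - M t) + (DD - M t) * M t) := by
      have hsub : U * ((Wstarᵀ * Wstar) - ((W t)ᵀ * W t)) * Uᵀ = DD - M t := by
        rw [Matrix.mul_sub, Matrix.sub_mul, hDDdef, hMdef]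
      rw [hG'def, Matrix.mul_smul, Matrix.smul_mul, Matrix.mul_add, Matrix.add_mul,
        hmul2 ((W t)ᵀ * W t) (Wstarᵀ * Wstar - (W t)ᵀ * W t),
        hmul2 (Wstarᵀ * Wstar - (W t)ᵀ * W t) ((W t)ᵀ * W t), hsub]
    rw [← step2]
    exact step1
  -- at time zero M is diagonal
  have hM0 : ∀ i j, i ≠ j → M 0 i j = 0 := by
    intro i j hij
    have : M 0 = σ0 • (1 : Matrix (Fin d) (Fin d) ℝ) := by
      rw [hMdef]
      simp only [hinit]
      rw [Matrix.mul_smul, Matrix.smul_mul, Matrix.mul_one, hUUT]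
    rw [this]
    simp [Matrix.one_apply_ne hij]
  -- off-diagonal entries vanish for all time
  have hoff := offdiag_zero DD M hM' hM0 hDd
  have hMdiag : ∀ t : ℝ, (M t).IsDiag := fun t i j hij => hoff t i j hij
  refine ⟨U, hUUT, hDd, hMdiag, ?_⟩
  intro i t
  have h1 := hM' t i i
  have hval : ((1/2 : ℝ) • (M t * (DD - M t) + (DD - M t) * M t)) i i
      = M t i i * (DD i i - M t i i) := by
    have e1 : (M t * (DD - M t)) i i = M t i i * (DD - M t) i i := by
      rw [Matrix.mul_apply]
      apply Finset.sum_eq_single i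
      · intro k _ hk
        rw [hMdiag t (show i ≠ k from fun h => hk h.symm), zero_mul]
      · intro h; exact absurd (Finset.mem_univ i) h
    have e2 : ((DD - M t) * M t) i i = (DD - M t) i i * M t i i := by
      rw [Matrix.mul_apply]
      apply Finset.sum_eq_single i
      · intro k _ hk
        have : (DD - M t) i k = 0 := by
          rw [Matrix.sub_apply, hDd (show i ≠ k from fun h => hk h.symm),
            hMdiag t (show i ≠ k from fun h => hk h.symm), sub_zero]
        rw [this, zero_mul]
      · intro h; exact absurd (Finset.mem_univ i) h
    simp only [Matrix.smul_apply, Matrix.add_apply, e1, e2, smul_eq_mul, Matrix.sub_apply]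
    ring
  rw [hval] at h1
  exact h1
end

section
/- Let σᵢ and σⱼ solve σ' = σ^{2-2/N}(σ* - σ) with targets σᵢ* > σⱼ* > 0 and common initial value σ₀ ∈ (0, σⱼ*). Then for all t > 0, σᵢ(t) > σⱼ(t). -/
open Set Filter Topology

/-- A solution of σ' = σ^p (star - σ) with σ(0) > 0 stays positive for t ≥ 0. -/
lemma pos_aux (p star : ℝ) (hp : 0 ≤ p) (hstar : 0 ≤ star) (σ : ℝ → ℝ)
    (hode : ∀ t : ℝ, HasDerivAt σ (σ t ^ p * (star - σ t)) t)
    (h0 : 0 < σ 0) : ∀ T : ℝ, 0 ≤ T → 0 < σ T := by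
  intro T hT
  by_contra hle
  push_neg at hle
  have hcont : Continuous σ := by
    rw [continuous_iff_continuousAt]; exact fun t => (hode t).continuousAt
  set Z : Set ℝ := Icc 0 T ∩ σ ⁻¹' Iic 0 with hZ
  have hZne : Z.Nonempty := ⟨T, ⟨hT, le_refl T⟩, hle⟩
  have hZclosed : IsClosed Z := isClosed_Icc.inter (isClosed_Iic.preimage hcont)
  have hZbdd : BddBelow Z := ⟨0, fun s hs => hs.1.1⟩
  set u := sInf Z with hu
  have huZ : u ∈ Z := hZclosed.csInf_mem hZne hZbdd
  have hu0 : 0 ≤ u := huZ.1.1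
  have huσ : σ u ≤ 0 := huZ.2
  -- before u, σ is positive
  have hpos : ∀ s, 0 ≤ s → s < u → 0 < σ s := by
    intro s hs0 hsu
    by_contra hcon
    push_neg at hcon
    have hsZ : s ∈ Z := ⟨⟨hs0, hsu.le.trans huZ.1.2⟩, hcon⟩
    exact absurd (csInf_le hZbdd hsZ) (not_le.mpr hsu)
  have hupos : 0 < u := by
    rcases lt_or_eq_of_le hu0 with h | h
    · exact h
    · exact absurd huσ (not_le.mpr (h ▸ h0))
  -- σ u = 0 by continuity from the left
  have huσ0 : σ u = 0 := by
    refine le_antisymm huσ ?_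
    have htend : Tendsto σ (𝓝[<] u) (𝓝 (σ u)) :=
      (hcont.tendsto u).mono_left nhdsWithin_le_nhds
    refine ge_of_tendsto htend ?_
    filter_upwards [Ioo_mem_nhdsLT_of_mem (⟨hupos, le_refl u⟩ : u ∈ Ioc 0 u)]
      with s hs
    exact (hpos s hs.1.le hs.2).le
  -- σ ∈ [0, M] on [0, u]
  have hne : (Icc 0 u).Nonempty := ⟨0, le_refl 0, hu0⟩
  obtain ⟨m, hm, hmax⟩ :=
    isCompact_Icc.exists_isMaxOn hne (hcont.continuousOn : ContinuousOn σ (Icc 0 u))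
  set M := σ m with hM
  have hMpos : 0 < M := lt_of_lt_of_le h0 (hmax ⟨le_refl 0, hu0⟩)
  have hσnonneg : ∀ s ∈ Icc (0:ℝ) u, 0 ≤ σ s := by
    intro s hs
    rcases lt_or_eq_of_le hs.2 with h | h
    · exact (hpos s hs.1 h).le
    · rw [h, huσ0]
  set C := max 1 (M ^ p) with hC
  have hCpos : 0 < C := lt_of_lt_of_le one_pos (le_max_left _ _)
  set h : ℝ → ℝ := fun s => σ s * Real.exp (C * s) with hh
  have hderiv : ∀ s : ℝ, HasDerivAt h
      (σ s ^ p * (star - σ s) * Real.exp (C * s) + σ s * (Real.exp (C * s) * C)) s := by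
    intro s
    have he : HasDerivAt (fun s : ℝ => Real.exp (C * s)) (Real.exp (C * s) * C) s := by
      simpa using ((hasDerivAt_id s).const_mul C).exp
    exact (hode s).mul he
  -- the derivative is nonnegative on [0,u]
  have hDnn : ∀ s ∈ Icc (0:ℝ) u,
      0 ≤ σ s ^ p * (star - σ s) * Real.exp (C * s) + σ s * (Real.exp (C * s) * C) := by
    intro s hs
    have hσ0s : 0 ≤ σ s := hσnonneg s hs
    have hσM : σ s ≤ M := hmax hs
    have hexp : 0 < Real.exp (C * s) := Real.exp_pos _
    rcases le_or_gt (σ s) star with hcase | hcase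
    · have h1 : 0 ≤ σ s ^ p * (star - σ s) :=
        mul_nonneg (Real.rpow_nonneg hσ0s p) (sub_nonneg.mpr hcase)
      positivity
    · have hσpos : 0 < σ s := lt_of_le_of_lt hstar hcase
      have hrp : σ s ^ p ≤ C := by
        calc σ s ^ p ≤ M ^ p := Real.rpow_le_rpow hσ0s hσM hp
        _ ≤ C := le_max_right _ _
      have key : 0 ≤ σ s ^ p * (star - σ s) + σ s * C := by
        have h1 : σ s ^ p * (star - σ s) ≥ σ s ^ p * (-σ s) := by
          apply mul_le_mul_of_nonneg_left _ (Real.rpow_nonneg hσ0s p)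
          linarith
        have h2 : σ s ^ p * σ s ≤ C * σ s :=
          mul_le_mul_of_nonneg_right hrp hσ0s
        nlinarith
      calc (0:ℝ) = 0 * Real.exp (C * s) := by ring
      _ ≤ (σ s ^ p * (star - σ s) + σ s * C) * Real.exp (C * s) :=
          mul_le_mul_of_nonneg_right key hexp.le
      _ = σ s ^ p * (star - σ s) * Real.exp (C * s) + σ s * (Real.exp (C * s) * C) := by ring
  have hmono : MonotoneOn h (Icc 0 u) := by
    apply monotoneOn_of_deriv_nonneg (convex_Icc 0 u)
    · exact (Continuous.continuousOn (by continuity : Continuous h))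
    · intro x hx
      exact (hderiv x).differentiableAt.differentiableWithinAt
    · intro x hx
      rw [(hderiv x).deriv]
      exact hDnn x (interior_subset (by simpa using hx))
  have hmono0u : h 0 ≤ h u := hmono (left_mem_Icc.mpr hu0) (right_mem_Icc.mpr hu0) hu0
  have hH0 : 0 < h 0 := mul_pos h0 (Real.exp_pos _)
  have hHu : h u = 0 := by simp [hh, huσ0]
  linarith

theorem stmt_19 (N : ℕ) (hN : 1 ≤ N) (σis σjs σ0 : ℝ)
    (hσjs : 0 < σjs) (hlt : σjs < σis)
    (hσ0 : 0 < σ0) (hσ0j : σ0 < σjs)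
    (σi σj : ℝ → ℝ)
    (hodei : ∀ t : ℝ, HasDerivAt σi (σi t ^ (2 - 2 / (N : ℝ)) * (σis - σi t)) t)
    (hodej : ∀ t : ℝ, HasDerivAt σj (σj t ^ (2 - 2 / (N : ℝ)) * (σjs - σj t)) t)
    (hiniti : σi 0 = σ0) (hinitj : σj 0 = σ0) :
    ∀ t : ℝ, 0 < t → σj t < σi t := by
  set p : ℝ := 2 - 2 / (N : ℝ) with hpdef
  have hN1 : (1:ℝ) ≤ (N:ℝ) := by exact_mod_cast hN
  have hp : 0 ≤ p := by
    have : 2 / (N : ℝ) ≤ 2 := by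
      rw [div_le_iff₀ (by linarith)]
      nlinarith
    simp [hpdef]; linarith
  -- σj stays positive for t ≥ 0
  have hjpos : ∀ T : ℝ, 0 ≤ T → 0 < σj T :=
    pos_aux p σjs hp hσjs.le σj hodej (by rw [hinitj]; exact hσ0)
  set f : ℝ → ℝ := fun s => σi s - σj s with hf
  have hfd : ∀ s : ℝ, HasDerivAt f
      (σi s ^ p * (σis - σi s) - σj s ^ p * (σjs - σj s)) s :=
    fun s => (hodei s).sub (hodej s)
  have hfcont : Continuous f := by
    rw [continuous_iff_continuousAt]; exact fun s => (hfd s).continuousAt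
  have hf0 : f 0 = 0 := by simp [hf, hiniti, hinitj]
  -- f' (0) > 0
  have hd0pos : 0 < σi 0 ^ p * (σis - σi 0) - σj 0 ^ p * (σjs - σj 0) := by
    rw [hiniti, hinitj]
    have h1 : 0 < σ0 ^ p := Real.rpow_pos_of_pos hσ0 p
    have : σ0 ^ p * (σis - σ0) - σ0 ^ p * (σjs - σ0) = σ0 ^ p * (σis - σjs) := by ring
    rw [this]
    exact mul_pos h1 (by linarith)
  intro t ht
  by_contra hcon
  push_neg at hcon
  have hft : f t ≤ 0 := by simp [hf]; linarith
  -- there is s₀ ∈ (0, t) with f s₀ > 0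
  have hslope : Tendsto (slope f 0) (𝓝[≠] 0) (𝓝 (σi 0 ^ p * (σis - σi 0) - σj 0 ^ p * (σjs - σj 0))) :=
    hasDerivAt_iff_tendsto_slope.mp (hfd 0)
  have hslope' : Tendsto (slope f 0) (𝓝[>] 0) (𝓝 (σi 0 ^ p * (σis - σi 0) - σj 0 ^ p * (σjs - σj 0))) :=
    hslope.mono_left (nhdsWithin_mono _ (fun x hx => ne_of_gt hx))
  have hev : ∀ᶠ s in 𝓝[>] (0:ℝ), 0 < slope f 0 s :=
    hslope'.eventually (eventually_gt_nhds hd0pos)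
  have hev2 : ∀ᶠ s in 𝓝[>] (0:ℝ), s ∈ Ioo (0:ℝ) t :=
    Ioo_mem_nhdsGT_of_mem (left_mem_Ico.mpr ht)
  obtain ⟨s₀, hs₀slope, hs₀mem⟩ := (hev.and hev2).exists
  have hfs₀ : 0 < f s₀ := by
    have : slope f 0 s₀ = f s₀ / s₀ := by
      simp [slope_def_field, hf0]
    rw [this] at hs₀slope
    have := mul_pos hs₀slope hs₀mem.1
    rwa [div_mul_cancel₀ _ (ne_of_gt hs₀mem.1)] at this
  -- first zero of f after s₀
  set Z : Set ℝ := Icc s₀ t ∩ f ⁻¹' Iic 0 with hZ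
  have hZne : Z.Nonempty := ⟨t, ⟨hs₀mem.2.le, le_refl t⟩, hft⟩
  have hZclosed : IsClosed Z := isClosed_Icc.inter (isClosed_Iic.preimage hfcont)
  have hZbdd : BddBelow Z := ⟨s₀, fun s hs => hs.1.1⟩
  set u := sInf Z with hu
  have huZ : u ∈ Z := hZclosed.csInf_mem hZne hZbdd
  have hus₀ : s₀ ≤ u := huZ.1.1
  have hpos : ∀ s, s₀ ≤ s → s < u → 0 < f s := by
    intro s hs0 hsu
    by_contra hc
    push_neg at hc
    exact absurd (csInf_le hZbdd ⟨⟨hs0, hsu.le.trans huZ.1.2⟩, hc⟩) (not_le.mpr hsu)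
  have hus₀' : s₀ < u := by
    rcases lt_or_eq_of_le hus₀ with h | h
    · exact h
    · exact absurd huZ.2 (not_le.mpr (h ▸ hfs₀))
  have hfu : f u = 0 := by
    refine le_antisymm huZ.2 ?_
    have htend : Tendsto f (𝓝[<] u) (𝓝 (f u)) :=
      (hfcont.tendsto u).mono_left nhdsWithin_le_nhds
    refine ge_of_tendsto htend ?_
    filter_upwards [Ioo_mem_nhdsLT_of_mem (⟨hus₀', le_refl u⟩ : u ∈ Ioc s₀ u)]
      with s hs
    exact (hpos s hs.1.le hs.2).le
  -- derivative at u is ≤ 0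
  have hslopeu : Tendsto (slope f u) (𝓝[<] u)
      (𝓝 (σi u ^ p * (σis - σi u) - σj u ^ p * (σjs - σj u))) :=
    (hasDerivAt_iff_tendsto_slope.mp (hfd u)).mono_left
      (nhdsWithin_mono _ (fun x hx => ne_of_lt hx))
  have hle0 : σi u ^ p * (σis - σi u) - σj u ^ p * (σjs - σj u) ≤ 0 := by
    refine le_of_tendsto hslopeu ?_
    filter_upwards [Ioo_mem_nhdsLT_of_mem (⟨hus₀', le_refl u⟩ : u ∈ Ioc s₀ u)]
      with s hs
    have hfs : 0 < f s := hpos s hs.1.le hs.2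
    have : slope f u s = f s / (s - u) := by
      simp [slope_def_field, hfu]
    rw [this]
    exact le_of_lt (div_neg_of_pos_of_neg hfs (by linarith [hs.2]))
  -- but it's positive, contradiction
  have hij : σi u = σj u := by
    have : σi u - σj u = 0 := hfu
    linarith
  have hσju : 0 < σj u := hjpos u (by linarith [hs₀mem.1])
  have : 0 < σi u ^ p * (σis - σi u) - σj u ^ p * (σjs - σj u) := by
    rw [hij]
    have h1 : 0 < σj u ^ p := Real.rpow_pos_of_pos hσju p
    have : σj u ^ p * (σis - σj u) - σj u ^ p * (σjs - σj u) = σj u ^ p * (σis - σjs) := by ring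
    rw [this]
    exact mul_pos h1 (by linarith)
  linarith
end
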